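/- arXiv:1809.05287 — 5 statements merged into one kernel-verified Lean document; each statement's English description precedes it below -/
import Mathlib

section
/- In a d-tiling T, for any box A ∈ T and any point p ∈ A such that p_i = A_i^- (resp. p_i = A_i^+) for some i ∈ {1,…,d}, there exists a box B ∈ T ∪ T_ext such that p ∈ A ∩ B and such that A_j ∩ B_j is degenerate only for j = i; in particular dim(A ∩ B) = d − 1. -/
/- Common framework: axis-parallel boxes (with extended-real endpoints, to
accommodate the unbounded exterior boxes of `T_ext`), `d`-tilings of the cube
`[-1,1]^d`, the exterior boxes, proper tilings, slices, cuts, sides and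
separations. -/

noncomputable section

open Classical

attribute [local instance] Classical.propDecidable

/-- A `d`-box, given by the lower and upper endpoints of its coordinate
intervals (extended reals, so that the unbounded exterior boxes are covered).
The interval in coordinate `i` is `[lo i, hi i]`. -/
structure Box (d : ℕ) where
  lo : Fin d → EReal
  hi : Fin d → EReal

namespace Box

variable {d : ℕ}

/-- Membership of a (real) point in a box. -/
def mem (B : Box d) (p : Fin d → ℝ) : Prop :=
  ∀ i, B.lo i ≤ (p i : EReal) ∧ (p i : EReal) ≤ B.hi i

/-- The set of real points of a box. -/
def toSet (B : Box d) : Set (Fin d → ℝ) := {p | B.mem p}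

/-- The interior of a box (for full-dimensional boxes). -/
def interior (B : Box d) : Set (Fin d → ℝ) :=
  {p | ∀ i, B.lo i < (p i : EReal) ∧ (p i : EReal) < B.hi i}

/-- The dimension of a box: the number of non-degenerate coordinate
intervals. -/
def dim (B : Box d) : ℕ :=
  (Finset.univ.filter fun i => B.lo i < B.hi i).card

/-- A box is full-dimensional (`d`-dimensional) if all of its coordinate
intervals are non-degenerate. -/
def FullDim (B : Box d) : Prop := ∀ i, B.lo i < B.hi i

end Box

/-- Two boxes intersect when they share a (real) point. -/
def Intersects {d : ℕ} (A B : Box d) : Prop := (A.toSet ∩ B.toSet).Nonempty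

/-- The dimension of the intersection `A ∩ B` of two boxes: the number of
coordinates `i` where the interval `A_i ∩ B_i` is non-degenerate. -/
def interDim {d : ℕ} (A B : Box d) : ℕ :=
  (Finset.univ.filter fun i =>
    max (A.lo i) (B.lo i) < min (A.hi i) (B.hi i)).card

/-- Two intersecting boxes touch in dimension `i` when `A_i ∩ B_i` is
degenerate. -/
def Touch {d : ℕ} (A B : Box d) (i : Fin d) : Prop :=
  Intersects A B ∧ max (A.lo i) (B.lo i) = min (A.hi i) (B.hi i)

/-- The cube `[-1,1]^d`. -/
def cube (d : ℕ) : Set (Fin d → ℝ) := {p | ∀ i, -1 ≤ p i ∧ p i ≤ 1}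

/-- A `d`-tiling: a finite collection of full-dimensional `d`-boxes contained
in `[-1,1]^d`, with pairwise disjoint interiors, whose union is `[-1,1]^d`. -/
def IsTiling {d : ℕ} (𝒯 : Finset (Box d)) : Prop :=
  (∀ B ∈ 𝒯, B.FullDim) ∧
  (∀ B ∈ 𝒯, B.toSet ⊆ cube d) ∧
  (∀ A ∈ 𝒯, ∀ B ∈ 𝒯, A ≠ B → A.interior ∩ B.interior = ∅) ∧
  (∀ p ∈ cube d, ∃ B ∈ 𝒯, B.mem p)

/-- The exterior box `T(i,-)` (for `s = false`) resp. `T(i,+)`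
(for `s = true`). -/
def extBox (d : ℕ) (i : Fin d) (s : Bool) : Box d where
  lo j := if j < i then ((-1 : ℝ) : EReal)
          else if j = i then (if s then ((1 : ℝ) : EReal) else ⊥) else ⊥
  hi j := if j < i then ((1 : ℝ) : EReal)
          else if j = i then (if s then ⊤ else ((-1 : ℝ) : EReal)) else ⊤

/-- The family `T_ext` of the `2d` exterior boxes. -/
def extBoxes (d : ℕ) : Finset (Box d) :=
  (Finset.univ : Finset (Fin d × Bool)).image fun q => extBox d q.1 q.2

/-- The collection `T ∪ T_ext`. -/
def withExt {d : ℕ} (𝒯 : Finset (Box d)) : Finset (Box d) := 𝒯 ∪ extBoxes d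

/-- A `d`-tiling is proper when every point of `ℝ^d` belongs to at most `d+1`
boxes of `T ∪ T_ext`. -/
def Proper {d : ℕ} (𝒯 : Finset (Box d)) : Prop :=
  ∀ p : Fin d → ℝ, ((withExt 𝒯).filter fun B => B.mem p).card ≤ d + 1

/-- The hyperplane `H^(i)_x` is generic w.r.t. `𝒯` when `x` is not an endpoint
of the `i`-th interval of any box of `𝒯`. -/
def Generic {d : ℕ} (𝒯 : Finset (Box d)) (i : Fin d) (x : ℝ) : Prop :=
  ∀ B ∈ 𝒯, (x : EReal) ≠ B.lo i ∧ (x : EReal) ≠ B.hi i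

/-- The slice `B|^(i)_x` of a box `B` by the hyperplane `H^(i)_x`, regarded
as a box of `ℝ^d` by omitting coordinate `i`. -/
def sliceBox {d : ℕ} (B : Box (d + 1)) (i : Fin (d + 1)) : Box d where
  lo j := B.lo (i.succAbove j)
  hi j := B.hi (i.succAbove j)

/-- The slice `T|^(i)_x` of a tiling by the hyperplane `H^(i)_x`. -/
def sliceT {d : ℕ} (𝒯 : Finset (Box (d + 1))) (i : Fin (d + 1)) (x : ℝ) :
    Finset (Box d) :=
  (𝒯.filter fun B => B.lo i ≤ (x : EReal) ∧ (x : EReal) ≤ B.hi i).image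
    fun B => sliceBox B i

/-- The box `B|^(i)-_x` (the nontrivial cases: if `B_i^+ < x` it is `B`
itself, and if `B_i^- < x ≤ B_i^+` the interval `B_i` is replaced by
`[B_i^-, 1]`; the empty case `x ≤ B_i^-` is filtered out in `cutMinus`). -/
def cutMinusBox {d : ℕ} (B : Box d) (i : Fin d) (x : ℝ) : Box d :=
  if B.hi i < (x : EReal) then B
  else ⟨B.lo, Function.update B.hi i ((1 : ℝ) : EReal)⟩

/-- The box `B|^(i)+_x` (the nontrivial cases: if `x < B_i^-` it is `B`
itself, and if `B_i^- ≤ x < B_i^+` the interval `B_i` is replaced by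
`[-1, B_i^+]`; the empty case `B_i^+ ≤ x` is filtered out in `cutPlus`). -/
def cutPlusBox {d : ℕ} (B : Box d) (i : Fin d) (x : ℝ) : Box d :=
  if (x : EReal) < B.lo i then B
  else ⟨Function.update B.lo i ((-1 : ℝ) : EReal), B.hi⟩

/-- The collection `T|^(i)-_x` of nonempty boxes `B|^(i)-_x`, `B ∈ T`. -/
def cutMinus {d : ℕ} (𝒯 : Finset (Box d)) (i : Fin d) (x : ℝ) :
    Finset (Box d) :=
  (𝒯.filter fun B => B.lo i < (x : EReal)).image fun B => cutMinusBox B i x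

/-- The collection `T|^(i)+_x` of nonempty boxes `B|^(i)+_x`, `B ∈ T`. -/
def cutPlus {d : ℕ} (𝒯 : Finset (Box d)) (i : Fin d) (x : ℝ) :
    Finset (Box d) :=
  (𝒯.filter fun B => (x : EReal) < B.hi i).image fun B => cutPlusBox B i x

/-- The side `S(B,i,-)` (for `s = false`) resp. `S(B,i,+)` (for `s = true`)
of a box `B`. -/
def sideBox {d : ℕ} (B : Box d) (i : Fin d) (s : Bool) : Box d where
  lo j := if j = i then (if s then B.hi i else B.lo i) else B.lo j
  hi j := if j = i then (if s then B.hi i else B.lo i) else B.hi j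

/-- The set of all sides of boxes of `T ∪ T_ext`. -/
def sides {d : ℕ} (𝒯 : Finset (Box d)) : Finset (Box d) :=
  ((withExt 𝒯) ×ˢ (Finset.univ : Finset (Fin d × Bool))).image
    fun q => sideBox q.1 q.2.1 q.2.2

/-- Two sides are linked when they intersect on a `(d-1)`-dimensional box. -/
def Linked {d : ℕ} (S S' : Box d) : Prop :=
  Intersects S S' ∧ interDim S S' = d - 1

/-- The linking relation, restricted to the sides of `T ∪ T_ext`. -/
def linkRel {d : ℕ} (𝒯 : Finset (Box d)) (S S' : Box d) : Prop :=
  S ∈ sides 𝒯 ∧ S' ∈ sides 𝒯 ∧ Linked S S'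

/-- The `∼`-equivalence class of a side (sides reachable by chains of linked
sides). -/
def sepClass {d : ℕ} (𝒯 : Finset (Box d)) (S₀ : Box d) : Set (Box d) :=
  {S | Relation.ReflTransGen (linkRel 𝒯) S₀ S}

/-- The separation generated by a side `S₀`: the union of the sides in its
`∼`-equivalence class. -/
def sepSet {d : ℕ} (𝒯 : Finset (Box d)) (S₀ : Box d) : Set (Fin d → ℝ) :=
  ⋃ S ∈ sepClass 𝒯 S₀, S.toSet

/-- `S` is degenerate in dimension `i` with value `x`, i.e. it is contained in
the hyperplane `H^(i)_x`. -/
def DegenAt {d : ℕ} (S : Box d) (i : Fin d) (x : ℝ) : Prop :=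
  S.lo i = (x : EReal) ∧ S.hi i = (x : EReal)

/-- A tiling is in general position when no two distinct separations are
coplanar: any two sides whose separations lie in a common hyperplane
`H^(i)_x` are `∼`-equivalent. -/
def GeneralPosition {d : ℕ} (𝒯 : Finset (Box d)) : Prop :=
  ∀ S₀ ∈ sides 𝒯, ∀ S₁ ∈ sides 𝒯, ∀ (i : Fin d) (x : ℝ),
    DegenAt S₀ i x → DegenAt S₁ i x →
      Relation.ReflTransGen (linkRel 𝒯) S₀ S₁

/-- The dimension of the intersection `⋂_{B ∈ 𝓑} B` of a finite family of
boxes: the number of coordinates where the intersected interval is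
non-degenerate. -/
def interDimAll {d : ℕ} (𝓑 : Finset (Box d)) : ℕ :=
  (Finset.univ.filter fun i =>
    𝓑.sup (fun B => B.lo i) < 𝓑.inf (fun B => B.hi i)).card

/-- The digraph `G(T)`: an arc from `A` to `B` (for distinct `A, B ∈ T`) iff
`B_i^- < A_i^+` for all `i`. -/
def tilingArc {d : ℕ} (𝒯 : Finset (Box d)) (A B : Box d) : Prop :=
  A ∈ 𝒯 ∧ B ∈ 𝒯 ∧ A ≠ B ∧ ∀ i, B.lo i < A.hi i

namespace Stmt0Aux

lemma small_lo {x c : ℝ} {l : EReal} (hl : (x:EReal) < l) :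
    ∃ ε : ℝ, 0 < ε ∧ ∀ t : ℝ, 0 < t → t ≤ ε → ¬ (l ≤ ((x + t*c : ℝ):EReal)) := by
  induction l using EReal.rec with
  | bot => exact absurd hl (by simp)
  | coe b =>
    have hxb : x < b := by exact_mod_cast hl
    refine ⟨(b - x)/(|c|+1), div_pos (by linarith) (by positivity), ?_⟩
    intro t ht hte hcon
    rw [EReal.coe_le_coe_iff] at hcon
    have hε1 : (b - x)/(|c|+1) * (|c|+1) = b - x := div_mul_cancel₀ _ (by positivity)
    have f1 : t*c ≤ t*|c| := mul_le_mul_of_nonneg_left (le_abs_self c) ht.le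
    have f2 : t*|c| ≤ (b - x)/(|c|+1)*|c| := mul_le_mul_of_nonneg_right hte (abs_nonneg c)
    have hεp : 0 < (b - x)/(|c|+1) := div_pos (by linarith) (by positivity)
    nlinarith
  | top =>
    exact ⟨1, one_pos, fun t _ _ hcon => EReal.coe_ne_top _ (top_le_iff.mp hcon)⟩

lemma small_hi {x c : ℝ} {h : EReal} (hh : h < (x:EReal)) :
    ∃ ε : ℝ, 0 < ε ∧ ∀ t : ℝ, 0 < t → t ≤ ε → ¬ (((x + t*c : ℝ):EReal) ≤ h) := by
  induction h using EReal.rec with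
  | top => exact absurd hh (by simp)
  | coe b =>
    have hxb : b < x := by exact_mod_cast hh
    refine ⟨(x - b)/(|c|+1), div_pos (by linarith) (by positivity), ?_⟩
    intro t ht hte hcon
    rw [EReal.coe_le_coe_iff] at hcon
    have hε1 : (x - b)/(|c|+1) * (|c|+1) = x - b := div_mul_cancel₀ _ (by positivity)
    have f1 : t*(-c) ≤ t*|c| := mul_le_mul_of_nonneg_left (neg_le_abs c) ht.le
    have f2 : t*|c| ≤ (x - b)/(|c|+1)*|c| := mul_le_mul_of_nonneg_right hte (abs_nonneg c)
    have hεp : 0 < (x - b)/(|c|+1) := div_pos (by linarith) (by positivity)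
    nlinarith
  | bot =>
    exact ⟨1, one_pos, fun t _ _ hcon => EReal.coe_ne_bot _ (le_bot_iff.mp hcon)⟩

lemma convex_lo {l : EReal} {x a t : ℝ} (hx : l ≤ (x:EReal)) (ha : l < (a:EReal))
    (ht : 0 < t) (ht1 : t ≤ 1) : l < ((x + t*(a - x) : ℝ):EReal) := by
  induction l using EReal.rec with
  | bot => exact bot_lt_iff_ne_bot.mpr (EReal.coe_ne_bot _)
  | coe b =>
    have hbx : b ≤ x := by exact_mod_cast hx
    have hba : b < a := by exact_mod_cast ha
    exact_mod_cast (by nlinarith : b < x + t*(a-x))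
  | top => exact absurd hx (by simp)

lemma convex_hi {h : EReal} {x a t : ℝ} (hx : (x:EReal) ≤ h) (ha : (a:EReal) < h)
    (ht : 0 < t) (ht1 : t ≤ 1) : ((x + t*(a - x) : ℝ):EReal) < h := by
  induction h using EReal.rec with
  | top => exact lt_top_iff_ne_top.mpr (EReal.coe_ne_top _)
  | coe b =>
    have hbx : x ≤ b := by exact_mod_cast hx
    have hba : a < b := by exact_mod_cast ha
    exact_mod_cast (by nlinarith : x + t*(a-x) < b)
  | bot => exact absurd hx (by simp)

lemma max_lt_min' {al ah bl bh : EReal} {x : ℝ} (h1 : al < (x:EReal)) (h2 : (x:EReal) < ah)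
    (h3 : bl ≤ (x:EReal)) (h4 : (x:EReal) ≤ bh) (h5 : bl < bh) : max al bl < min ah bh := by
  rw [max_lt_iff, lt_min_iff, lt_min_iff]
  exact ⟨⟨h1.trans h2, h1.trans_le h4⟩, ⟨h3.trans_lt h2, h5⟩⟩

lemma extBox_fullDim (d : ℕ) (i : Fin d) (s : Bool) : (extBox d i s).FullDim := by
  intro j
  cases s <;>
  · simp only [extBox]
    split_ifs with h1 h2
    all_goals first
      | exact bot_lt_top
      | exact EReal.bot_lt_coe _
      | exact EReal.coe_lt_top _
      | exact_mod_cast (by norm_num : (-1:ℝ) < 1)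

lemma withExt_fullDim {d : ℕ} {𝒯 : Finset (Box d)} (hT : IsTiling 𝒯) :
    ∀ B ∈ withExt 𝒯, B.FullDim := by
  intro B hB
  rcases Finset.mem_union.mp hB with h | h
  · exact hT.1 B h
  · obtain ⟨⟨k, s⟩, -, rfl⟩ := Finset.mem_image.mp h
    exact extBox_fullDim d k s

lemma cover {d : ℕ} {𝒯 : Finset (Box d)} (hT : IsTiling 𝒯) (q : Fin d → ℝ) :
    ∃ B ∈ withExt 𝒯, B.mem q := by
  by_cases hq : q ∈ cube d
  · obtain ⟨B, hB, hm⟩ := hT.2.2.2 q hq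
    exact ⟨B, Finset.mem_union_left _ hB, hm⟩
  · have hS : (Finset.univ.filter fun j => ¬(-1 ≤ q j ∧ q j ≤ 1)).Nonempty := by
      rw [Finset.filter_nonempty_iff]
      simp only [cube, Set.mem_setOf_eq] at hq
      push_neg at hq
      obtain ⟨j, hj⟩ := hq
      exact ⟨j, Finset.mem_univ j, fun h => hj h.1 |>.not_ge h.2⟩
    set S := Finset.univ.filter fun j => ¬(-1 ≤ q j ∧ q j ≤ 1) with hSdef
    set i := S.min' hS with hidef
    have hiS : i ∈ S := S.min'_mem hS
    have hibad : ¬(-1 ≤ q i ∧ q i ≤ 1) := (Finset.mem_filter.mp hiS).2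
    have hlts : ∀ j, j < i → (-1 ≤ q j ∧ q j ≤ 1) := by
      intro j hj
      by_contra hc
      exact absurd (S.min'_le j (Finset.mem_filter.mpr ⟨Finset.mem_univ j, hc⟩)) (not_le_of_gt hj)
    have hcase : q i < -1 ∨ 1 < q i := by
      rcases not_and_or.mp hibad with h | h
      · exact Or.inl (lt_of_not_ge h)
      · exact Or.inr (lt_of_not_ge h)
    have hmem : ∀ s : Bool, (s = true → 1 ≤ q i) → (s = false → q i ≤ -1) →
        (extBox d i s).mem q := by
      intro s hst hsf j
      simp only [extBox]
      split_ifs with h1 h2 h3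
      · exact ⟨EReal.coe_le_coe_iff.mpr (hlts j h1).1, EReal.coe_le_coe_iff.mpr (hlts j h1).2⟩
      · subst h2
        exact ⟨EReal.coe_le_coe_iff.mpr (hst h3), le_top⟩
      · subst h2
        refine ⟨bot_le, EReal.coe_le_coe_iff.mpr (hsf ?_)⟩
        cases s
        · rfl
        · exact absurd rfl h3
      · exact ⟨bot_le, le_top⟩
    rcases hcase with h | h
    · exact ⟨extBox d i false, Finset.mem_union_right _
        (Finset.mem_image.mpr ⟨(i, false), Finset.mem_univ _, rfl⟩),
        hmem false (by simp) (fun _ => h.le)⟩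
    · exact ⟨extBox d i true, Finset.mem_union_right _
        (Finset.mem_image.mpr ⟨(i, true), Finset.mem_univ _, rfl⟩),
        hmem true (fun _ => h.le) (by simp)⟩

lemma exists_interior_pt {d : ℕ} {B : Box d} (h : B.FullDim) :
    ∃ a : Fin d → ℝ, ∀ j, B.lo j < (a j : EReal) ∧ (a j : EReal) < B.hi j := by
  choose a ha1 ha2 using fun j => EReal.exists_between_coe_real (h j)
  exact ⟨a, fun j => ⟨ha1 j, ha2 j⟩⟩

lemma no_overlap {d : ℕ} {𝒯 : Finset (Box d)} (hT : IsTiling 𝒯) {A B : Box d}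
    (hA : A ∈ 𝒯) (hB : B ∈ withExt 𝒯) (hAB : A ≠ B)
    (h : ∀ j, max (A.lo j) (B.lo j) < min (A.hi j) (B.hi j)) : False := by
  choose x hx1 hx2 using fun j => EReal.exists_between_coe_real (h j)
  have hxA : x ∈ A.interior := fun j =>
    ⟨(le_max_left _ _).trans_lt (hx1 j), (hx2 j).trans_le (min_le_left _ _)⟩
  have hxB : x ∈ B.interior := fun j =>
    ⟨(le_max_right _ _).trans_lt (hx1 j), (hx2 j).trans_le (min_le_right _ _)⟩
  have hxcube : x ∈ cube d := hT.2.1 A hA (fun j => ⟨(hxA j).1.le, (hxA j).2.le⟩)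
  rcases Finset.mem_union.mp hB with hB' | hB'
  · have := hT.2.2.1 A hA B hB' hAB
    exact absurd (Set.mem_inter hxA hxB) (by rw [this]; exact Set.notMem_empty x)
  · obtain ⟨⟨k, s⟩, -, rfl⟩ := Finset.mem_image.mp hB'
    have hk := hxB k
    simp only [Box.interior, extBox, Set.mem_setOf_eq] at hk
    rcases hk with ⟨hklo, hkhi⟩
    rw [if_neg (lt_irrefl k)] at hklo hkhi
    rw [if_pos trivial] at hklo hkhi
    cases s
    · rw [if_neg (by simp : ¬(false = true))] at hkhi
      have : x k < -1 := EReal.coe_lt_coe_iff.mp hkhi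
      linarith [(hxcube k).1]
    · rw [if_pos rfl] at hklo
      have : 1 < x k := EReal.coe_lt_coe_iff.mp hklo
      linarith [(hxcube k).2]

end Stmt0Aux

/-- In a `d`-tiling `T`, for any `A ∈ T` and any point `p ∈ A`
with `p_i = A_i^-` or `p_i = A_i^+`, there is a box `B ∈ T ∪ T_ext` such that
`p ∈ A ∩ B` and such that `A_j ∩ B_j` is degenerate only for `j = i`;
in particular `dim(A ∩ B) = d - 1`. -/
theorem stmt0 (d : ℕ) (𝒯 : Finset (Box d)) (hT : IsTiling 𝒯)
    (A : Box d) (hA : A ∈ 𝒯) (p : Fin d → ℝ) (hp : A.mem p) (i : Fin d)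
    (hi : (p i : EReal) = A.lo i ∨ (p i : EReal) = A.hi i) :
    ∃ B ∈ withExt 𝒯, B.mem p ∧
      (∀ j, max (A.lo j) (B.lo j) = min (A.hi j) (B.hi j) ↔ j = i) ∧
      interDim A B = d - 1 := by
  classical
  have hAfd : A.FullDim := hT.1 A hA
  obtain ⟨a, ha⟩ := Stmt0Aux.exists_interior_pt hAfd
  set δ : ℝ := if (p i : EReal) = A.hi i then 1 else -1 with hδdef
  set c : Fin d → ℝ := fun j => if j = i then δ else a j - p j with hcdef
  set q : ℝ → (Fin d → ℝ) := fun t j => p j + t * c j with hqdef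
  have hqval : ∀ t j, q t j = p j + t * c j := fun t j => by rw [hqdef]
  have hsel : ∀ B : Box d, ∃ ε : ℝ, 0 < ε ∧
      (¬ B.mem p → ∀ t, 0 < t → t ≤ ε → ¬ B.mem (q t)) := by
    intro B
    by_cases hBp : B.mem p
    · exact ⟨1, one_pos, fun h => absurd hBp h⟩
    · have hBp' : ∃ j, ¬ (B.lo j ≤ (p j : EReal) ∧ (p j : EReal) ≤ B.hi j) := by
        by_contra hc
        push_neg at hc
        exact hBp (fun j => hc j)
      obtain ⟨j, hj⟩ := hBp'
      rcases not_and_or.mp hj with hlo | hhi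
      · have hlo' : (p j : EReal) < B.lo j := lt_of_not_ge hlo
        obtain ⟨ε, hε, hεp⟩ := Stmt0Aux.small_lo (c := c j) hlo'
        refine ⟨ε, hε, fun _ t ht hte hmem => hεp t ht hte ?_⟩
        rw [← hqval t j]
        exact (hmem j).1
      · have hhi' : B.hi j < (p j : EReal) := lt_of_not_ge hhi
        obtain ⟨ε, hε, hεp⟩ := Stmt0Aux.small_hi (c := c j) hhi'
        refine ⟨ε, hε, fun _ t ht hte hmem => hεp t ht hte ?_⟩
        rw [← hqval t j]
        exact (hmem j).2
  choose g hg1 hg2 using hsel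
  have hsne : (withExt 𝒯).Nonempty := ⟨A, Finset.mem_union_left _ hA⟩
  set ε : ℝ := min ((withExt 𝒯).inf' hsne g) 1 with hεdef
  have hεpos : 0 < ε :=
    lt_min ((Finset.lt_inf'_iff hsne).mpr fun B _ => hg1 B) one_pos
  have hε1 : ε ≤ 1 := min_le_right _ _
  obtain ⟨B, hB, hqB⟩ := Stmt0Aux.cover hT (q ε)
  have hBp : B.mem p := by
    by_contra hnot
    exact hg2 B hnot ε hεpos ((min_le_left _ _).trans (Finset.inf'_le g hB)) hqB
  have hBfd : B.FullDim := Stmt0Aux.withExt_fullDim hT B hB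
  have hqj : ∀ j, j ≠ i → q ε j = p j + ε * (a j - p j) := by
    intro j hj
    rw [hqval, hcdef]
    simp [hj]
  have hAin : ∀ j, j ≠ i →
      A.lo j < ((q ε j : ℝ) : EReal) ∧ ((q ε j : ℝ) : EReal) < A.hi j := by
    intro j hj
    rw [hqj j hj]
    exact ⟨Stmt0Aux.convex_lo (hp j).1 (ha j).1 hεpos hε1,
      Stmt0Aux.convex_hi (hp j).2 (ha j).2 hεpos hε1⟩
  have hne : ∀ j, j ≠ i → max (A.lo j) (B.lo j) < min (A.hi j) (B.hi j) := fun j hj =>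
    Stmt0Aux.max_lt_min' (hAin j hj).1 (hAin j hj).2 (hqB j).1 (hqB j).2 (hBfd j)
  have hqi : q ε i = p i + ε * δ := by
    rw [hqval, hcdef]; simp
  have hieq : max (A.lo i) (B.lo i) = min (A.hi i) (B.hi i) := by
    rcases hi with h | h
    · -- p i = A.lo i : we moved downward, δ = -1
      have hδ1 : δ = -1 := by
        rw [hδdef, if_neg]
        rw [h]
        exact (hAfd i).ne
      have hqi' : q ε i = p i - ε := by rw [hqi, hδ1]; ring
      have hql : ((q ε i : ℝ) : EReal) < (p i : EReal) := by
        rw [hqi']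
        exact_mod_cast (by linarith : p i - ε < p i)
      have hBlo : B.lo i < (p i : EReal) := lt_of_le_of_lt (hqB i).1 hql
      have hAhi : (p i : EReal) < A.hi i := by rw [h]; exact hAfd i
      have hBhieq : B.hi i = (p i : EReal) := by
        rcases (hBp i).2.lt_or_eq with hlt | heq
        · exfalso
          have hAB : A ≠ B := by
            intro hEq
            rw [← hEq, ← h] at hBlo
            exact lt_irrefl _ hBlo
          refine Stmt0Aux.no_overlap hT hA hB hAB (fun j => ?_)
          by_cases hj : j = i
          · subst hj
            rw [max_lt_iff, lt_min_iff, lt_min_iff]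
            exact ⟨⟨hAfd j, by rw [← h]; exact hlt⟩, ⟨hBlo.trans hAhi, hBfd j⟩⟩
          · exact hne j hj
        · exact heq.symm
      have h1 : max (A.lo i) (B.lo i) = (p i : EReal) := by
        rw [← h]
        exact max_eq_left hBlo.le
      have h2 : min (A.hi i) (B.hi i) = (p i : EReal) := by
        rw [hBhieq]
        exact min_eq_right hAhi.le
      rw [h1, h2]
    · -- p i = A.hi i : we moved upward, δ = 1
      have hδ1 : δ = 1 := by rw [hδdef, if_pos h]
      have hqi' : q ε i = p i + ε := by rw [hqi, hδ1]; ring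
      have hql : (p i : EReal) < ((q ε i : ℝ) : EReal) := by
        rw [hqi']
        exact_mod_cast (by linarith : p i < p i + ε)
      have hBhi : (p i : EReal) < B.hi i := lt_of_lt_of_le hql (hqB i).2
      have hAlo : A.lo i < (p i : EReal) := by rw [h]; exact hAfd i
      have hBloeq : B.lo i = (p i : EReal) := by
        rcases (hBp i).1.lt_or_eq with hlt | heq
        · exfalso
          have hAB : A ≠ B := by
            intro hEq
            rw [← hEq, ← h] at hBhi
            exact lt_irrefl _ hBhi
          refine Stmt0Aux.no_overlap hT hA hB hAB (fun j => ?_)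
          by_cases hj : j = i
          · subst hj
            rw [max_lt_iff, lt_min_iff, lt_min_iff]
            exact ⟨⟨hAfd j, hAlo.trans hBhi⟩, ⟨by rw [← h]; exact hlt, hBfd j⟩⟩
          · exact hne j hj
        · exact heq
      have h1 : max (A.lo i) (B.lo i) = (p i : EReal) := by
        rw [hBloeq]
        exact max_eq_right hAlo.le
      have h2 : min (A.hi i) (B.hi i) = (p i : EReal) := by
        rw [← h]
        exact min_eq_left hBhi.le
      rw [h1, h2]
  refine ⟨B, hB, hBp, ?_, ?_⟩
  · intro j
    constructor
    · intro hEq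
      by_contra hj
      exact (hne j hj).ne hEq
    · rintro rfl
      exact hieq
  · unfold interDim
    have hfe : (Finset.univ.filter fun j =>
        max (A.lo j) (B.lo j) < min (A.hi j) (B.hi j)) =
        Finset.univ.filter fun j => j ≠ i := by
      apply Finset.filter_congr
      intro j _
      constructor
      · intro hlt hji
        subst hji
        exact hlt.ne hieq
      · intro hj
        exact hne j hj
    calc _ = (Finset.univ.filter fun j => j ≠ i).card := by rw [← hfe]; congr!
      _ = d - 1 := by rw [Finset.filter_ne', Finset.card_erase_of_mem (Finset.mem_univ i),
          Finset.card_univ, Fintype.card_fin]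


end
end

section
/- (Zaks) Let 𝓑 be a finite set of d-dimensional d-boxes with a common point, i.e. ⋂_{B ∈ 𝓑} B ≠ ∅. If for every pair of distinct boxes A, B ∈ 𝓑 we have dim(A ∩ B) = d − 1, then |𝓑| ≤ d + 1. -/
/- Common framework: axis-parallel boxes (with extended-real endpoints, to
accommodate the unbounded exterior boxes of `T_ext`), `d`-tilings of the cube
`[-1,1]^d`, the exterior boxes, proper tilings, slices, cuts, sides and
separations. -/

noncomputable section

open Classical

attribute [local instance] Classical.propDecidable

/-- Zaks: If a finite set `𝓑` of `d`-dimensional `d`-boxes has a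
common point and every two distinct boxes of `𝓑` intersect on a
`(d-1)`-dimensional box, then `|𝓑| ≤ d + 1`. -/
theorem stmt3 (d : ℕ) (𝓑 : Finset (Box d)) (hfull : ∀ B ∈ 𝓑, B.FullDim)
    (hcommon : ∃ p : Fin d → ℝ, ∀ B ∈ 𝓑, B.mem p)
    (hpair : ∀ A ∈ 𝓑, ∀ B ∈ 𝓑, A ≠ B → interDim A B = d - 1) :
    𝓑.card ≤ d + 1 := by
  by_contra hlt
  push_neg at hlt
  rcases Nat.eq_zero_or_pos d with hd | hd
  · have h1 : 𝓑.card ≤ 1 := Finset.card_le_one.mpr (by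
      intro a ha b hb
      cases a; cases b; subst hd; congr 1 <;> funext i <;> exact i.elim0)
    omega
  obtain ⟨p, hp⟩ := hcommon
  -- sign predicates
  set Plo : Box d → Fin d → Prop := fun B k => B.lo k = (p k : EReal) with hPlo
  set Phi : Box d → Fin d → Prop := fun B k => B.hi k = (p k : EReal) with hPhi
  have hnotboth : ∀ B ∈ 𝓑, ∀ k, ¬ (Plo B k ∧ Phi B k) := by
    rintro B hB k ⟨h1, h2⟩
    have := hfull B hB k
    rw [h1, h2] at this
    exact lt_irrefl _ this
  -- conflict predicate
  set Cf : Box d → Box d → Fin d → Prop :=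
    fun A B k => (Plo A k ∧ Phi B k) ∨ (Phi A k ∧ Plo B k) with hCf
  -- degeneracy equivalence
  have hdeg : ∀ A ∈ 𝓑, ∀ B ∈ 𝓑, ∀ k,
      (¬ (max (A.lo k) (B.lo k) < min (A.hi k) (B.hi k))) ↔ Cf A B k := by
    intro A hA B hB k
    have hA1 := (hp A hA k).1; have hA2 := (hp A hA k).2
    have hB1 := (hp B hB k).1; have hB2 := (hp B hB k).2
    constructor
    · intro h
      have h1 : min (A.hi k) (B.hi k) ≤ max (A.lo k) (B.lo k) := not_lt.mp h
      have hmaxle : max (A.lo k) (B.lo k) ≤ (p k : EReal) := max_le hA1 hB1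
      have hlemin : (p k : EReal) ≤ min (A.hi k) (B.hi k) := le_min hA2 hB2
      have hmax : max (A.lo k) (B.lo k) = (p k : EReal) :=
        le_antisymm hmaxle (hlemin.trans h1)
      have hmin : min (A.hi k) (B.hi k) = (p k : EReal) :=
        le_antisymm (h1.trans hmaxle) hlemin
      have hlo : Plo A k ∨ Plo B k := by
        rcases le_total (B.lo k) (A.lo k) with he | he
        · exact Or.inl (show A.lo k = _ by rw [← hmax, max_eq_left he])
        · exact Or.inr (show B.lo k = _ by rw [← hmax, max_eq_right he])
      have hhi : Phi A k ∨ Phi B k := by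
        rcases le_total (A.hi k) (B.hi k) with he | he
        · exact Or.inl (show A.hi k = _ by rw [← hmin, min_eq_left he])
        · exact Or.inr (show B.hi k = _ by rw [← hmin, min_eq_right he])
      rcases hlo with hl | hl <;> rcases hhi with hh | hh
      · exact absurd ⟨hl, hh⟩ (hnotboth A hA k)
      · exact Or.inl ⟨hl, hh⟩
      · exact Or.inr ⟨hh, hl⟩
      · exact absurd ⟨hl, hh⟩ (hnotboth B hB k)
    · rintro (⟨h1, h2⟩ | ⟨h1, h2⟩) hcon
      · have hlt' : max (A.lo k) (B.lo k) < (B.hi k) :=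
          lt_of_lt_of_le hcon (min_le_right _ _)
        have : (p k : EReal) < (p k : EReal) := by
          calc (p k : EReal) = A.lo k := h1.symm
            _ ≤ max (A.lo k) (B.lo k) := le_max_left _ _
            _ < B.hi k := hlt'
            _ = (p k : EReal) := h2
        exact lt_irrefl _ this
      · have hlt' : max (A.lo k) (B.lo k) < (A.hi k) :=
          lt_of_lt_of_le hcon (min_le_left _ _)
        have : (p k : EReal) < (p k : EReal) := by
          calc (p k : EReal) = B.lo k := h2.symm
            _ ≤ max (A.lo k) (B.lo k) := le_max_right _ _
            _ < A.hi k := hlt'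
            _ = (p k : EReal) := h1
        exact lt_irrefl _ this
  -- exactly one conflict coordinate
  have hone : ∀ A ∈ 𝓑, ∀ B ∈ 𝓑, A ≠ B →
      (Finset.univ.filter fun k => Cf A B k).card = 1 := by
    intro A hA B hB hne
    have h1 := hpair A hA B hB hne
    have h2 : (Finset.univ.filter fun k => Cf A B k) =
        (Finset.univ.filter fun k =>
          ¬ (max (A.lo k) (B.lo k) < min (A.hi k) (B.hi k))) := by
      apply Finset.filter_congr
      intro k _
      simpa using (hdeg A hA B hB k).symm
    rw [h2]
    have h3 := Finset.card_filter_add_card_filter_not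
      (s := (Finset.univ : Finset (Fin d)))
      (p := fun k => max (A.lo k) (B.lo k) < min (A.hi k) (B.hi k))
    unfold interDim at h1
    rw [h1] at h3
    simp only [Finset.card_univ, Fintype.card_fin] at h3
    omega
  -- the sign vectors
  set v : Box d → (Fin d → ℝ) := fun B k => if Plo B k then 1 else 0 with hv
  have hvinj : Set.InjOn v 𝓑 := by
    intro A hA B hB hvAB
    by_contra hne
    have h1 := hone A hA B hB hne
    obtain ⟨k, hk⟩ := Finset.card_pos.mp (h1 ▸ Nat.one_pos)
    have hk' : Cf A B k := (Finset.mem_filter.mp hk).2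
    have hiff : Plo A k ↔ Plo B k := by
      have h2 := congrFun hvAB k
      simp only [hv] at h2
      by_cases h3 : Plo A k <;> by_cases h4 : Plo B k
      · exact iff_of_true h3 h4
      · rw [if_pos h3, if_neg h4] at h2; norm_num at h2
      · rw [if_neg h3, if_pos h4] at h2; norm_num at h2
      · exact iff_of_false h3 h4
    rcases hk' with ⟨h1', h2'⟩ | ⟨h1', h2'⟩
    · exact hnotboth B hB k ⟨hiff.mp h1', h2'⟩
    · exact hnotboth A hA k ⟨hiff.mpr h2', h1'⟩
  -- get a nontrivial relation
  set t : Finset (Fin d → ℝ) := 𝓑.image v with ht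
  have htcard : t.card = 𝓑.card := Finset.card_image_of_injOn hvinj
  have hrank : Module.finrank ℝ (Fin d → ℝ) + 1 < t.card := by
    rw [htcard, Module.finrank_pi]
    simpa using hlt
  obtain ⟨f, hfsum, hfzero, e0, he0, hfne⟩ :=
    Module.exists_nontrivial_relation_sum_zero_of_finrank_succ_lt_card hrank
  set x : Box d → ℝ := fun B => f (v B) with hx
  have hsum1 : ∀ k, ∑ B ∈ 𝓑, (if Plo B k then x B else 0) = 0 := by
    intro k
    have h2 := congrFun hfsum k
    rw [ht, Finset.sum_image (fun a ha b hb => hvinj ha hb)] at h2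
    simpa [hv, hx, mul_ite, mul_one, mul_zero] using h2
  have hsum2 : ∑ B ∈ 𝓑, x B = 0 := by
    rw [ht, Finset.sum_image (fun a ha b hb => hvinj ha hb)] at hfzero
    exact hfzero
  obtain ⟨B0, hB0, hxB0⟩ : ∃ B ∈ 𝓑, x B ≠ 0 := by
    obtain ⟨B, hB, hvB⟩ := Finset.mem_image.mp he0
    exact ⟨B, hB, by rw [hx]; simp only; rw [hvB]; exact hfne⟩
  -- the indicator kernel
  set χ : Box d → Box d → Fin d → ℝ := fun A B k => if Cf A B k then 1 else 0 with hχ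
  have hχsum : ∀ A ∈ 𝓑, ∀ B ∈ 𝓑, A ≠ B → ∑ k, χ A B k = 1 := by
    intro A hA B hB hne
    simp only [hχ, Finset.sum_boole]
    have h := hone A hA B hB hne
    rw [Finset.card_eq_sum_ones, Finset.sum_filter] at h
    exact_mod_cast h
  have hχdiag : ∀ B ∈ 𝓑, ∀ k, χ B B k = 0 := by
    intro B hB k
    simp only [hχ, ite_eq_right_iff]
    rintro (⟨h1, h2⟩ | ⟨h1, h2⟩)
    · exact absurd ⟨h1, h2⟩ (hnotboth B hB k)
    · exact absurd ⟨h2, h1⟩ (hnotboth B hB k)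
  -- compute Q two ways
  have key1 : ∑ A ∈ 𝓑, ∑ B ∈ 𝓑, x A * x B * (∑ k, χ A B k)
      = - ∑ B ∈ 𝓑, x B * x B := by
    have step : ∀ A ∈ 𝓑, ∀ B ∈ 𝓑, x A * x B * (∑ k, χ A B k)
        = x A * x B - (if A = B then x A * x B else 0) := by
      intro A hA B hB
      by_cases h : A = B
      · subst h
        rw [Finset.sum_congr rfl (fun k _ => hχdiag A hA k)]
        simp
      · rw [hχsum A hA B hB h, if_neg h]; ring
    calc ∑ A ∈ 𝓑, ∑ B ∈ 𝓑, x A * x B * (∑ k, χ A B k)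
        = ∑ A ∈ 𝓑, ∑ B ∈ 𝓑, (x A * x B - (if A = B then x A * x B else 0)) :=
          Finset.sum_congr rfl fun A hA =>
            Finset.sum_congr rfl fun B hB => step A hA B hB
      _ = (∑ A ∈ 𝓑, ∑ B ∈ 𝓑, x A * x B)
          - ∑ A ∈ 𝓑, ∑ B ∈ 𝓑, (if A = B then x A * x B else 0) := by
          simp only [Finset.sum_sub_distrib]
      _ = - ∑ B ∈ 𝓑, x B * x B := by
          rw [← Finset.sum_mul_sum, hsum2, zero_mul]
          rw [Finset.sum_congr rfl
            (fun A hA => (Finset.sum_ite_eq 𝓑 A (fun B => x A * x B)).trans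
              (if_pos hA))]
          ring
  have key2 : ∑ A ∈ 𝓑, ∑ B ∈ 𝓑, x A * x B * (∑ k, χ A B k) = 0 := by
    have hswap : ∑ A ∈ 𝓑, ∑ B ∈ 𝓑, x A * x B * (∑ k, χ A B k)
        = ∑ k, ∑ A ∈ 𝓑, ∑ B ∈ 𝓑, x A * x B * χ A B k := by
      simp only [Finset.mul_sum]
      calc ∑ A ∈ 𝓑, ∑ B ∈ 𝓑, ∑ k, x A * x B * χ A B k
          = ∑ A ∈ 𝓑, ∑ k, ∑ B ∈ 𝓑, x A * x B * χ A B k :=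
            Finset.sum_congr rfl fun A _ => Finset.sum_comm
        _ = ∑ k, ∑ A ∈ 𝓑, ∑ B ∈ 𝓑, x A * x B * χ A B k := Finset.sum_comm
    rw [hswap]
    apply Finset.sum_eq_zero
    intro k _
    have hsplit : ∀ A ∈ 𝓑, ∀ B ∈ 𝓑, x A * x B * χ A B k
        = (if Plo A k then x A else 0) * (if Phi B k then x B else 0)
          + (if Phi A k then x A else 0) * (if Plo B k then x B else 0) := by
      intro A hA B hB
      have e1 : (if Plo A k then x A else 0) * (if Phi B k then x B else 0)
          = x A * x B * (if Plo A k ∧ Phi B k then 1 else 0) := by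
        by_cases h1 : Plo A k <;> by_cases h2 : Phi B k
        · rw [if_pos h1, if_pos h2, if_pos ⟨h1, h2⟩]; ring
        · rw [if_pos h1, if_neg h2, if_neg (fun h => h2 h.2)]; ring
        · rw [if_neg h1, if_pos h2, if_neg (fun h => h1 h.1)]; ring
        · rw [if_neg h1, if_neg h2, if_neg (fun h => h1 h.1)]; ring
      have e2 : (if Phi A k then x A else 0) * (if Plo B k then x B else 0)
          = x A * x B * (if Phi A k ∧ Plo B k then 1 else 0) := by
        by_cases h1 : Phi A k <;> by_cases h2 : Plo B k
        · rw [if_pos h1, if_pos h2, if_pos ⟨h1, h2⟩]; ring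
        · rw [if_pos h1, if_neg h2, if_neg (fun h => h2 h.2)]; ring
        · rw [if_neg h1, if_pos h2, if_neg (fun h => h1 h.1)]; ring
        · rw [if_neg h1, if_neg h2, if_neg (fun h => h1 h.1)]; ring
      have e3 : χ A B k = (if Plo A k ∧ Phi B k then 1 else 0)
          + (if Phi A k ∧ Plo B k then 1 else 0) := by
        simp only [hχ, hCf]
        by_cases h1 : Plo A k ∧ Phi B k
        · have h2 : ¬(Phi A k ∧ Plo B k) := fun h2 => hnotboth A hA k ⟨h1.1, h2.1⟩
          rw [if_pos (Or.inl h1), if_pos h1, if_neg h2]; norm_num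
        · by_cases h2 : Phi A k ∧ Plo B k
          · rw [if_pos (Or.inr h2), if_neg h1, if_pos h2]; norm_num
          · rw [if_neg (by tauto), if_neg h1, if_neg h2]; norm_num
      rw [e3, e1, e2]; ring
    rw [Finset.sum_congr rfl fun A hA =>
      Finset.sum_congr rfl fun B hB => hsplit A hA B hB]
    simp only [Finset.sum_add_distrib]
    rw [← Finset.sum_mul_sum, ← Finset.sum_mul_sum, hsum1 k, zero_mul, mul_zero]
    ring
  rw [key2] at key1
  have hzero : ∀ B ∈ 𝓑, x B * x B = 0 := by
    have h0 : ∑ B ∈ 𝓑, x B * x B = 0 := by linarith [key1]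
    intro B hB
    exact (Finset.sum_eq_zero_iff_of_nonneg
      (fun C _ => mul_self_nonneg (x C))).mp h0 B hB
  exact hxB0 (mul_self_eq_zero.mp (hzero B0 hB0))


end
end

section
/- In a d-tiling T, if two boxes A, B ∈ T ∪ T_ext intersect and touch in more than one dimension (i.e., A_i ∩ B_i is degenerate for at least two indices i), then there exists a point in A ∩ B that is contained in at least d + 2 boxes of T ∪ T_ext. -/
/- Common framework: axis-parallel boxes (with extended-real endpoints, to
accommodate the unbounded exterior boxes of `T_ext`), `d`-tilings of the cube
`[-1,1]^d`, the exterior boxes, proper tilings, slices, cuts, sides and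
separations. -/

noncomputable section

open Classical

attribute [local instance] Classical.propDecidable

lemma extBox_fullDim {d : ℕ} (i : Fin d) (s : Bool) : (extBox d i s).FullDim := by
  intro j
  simp only [extBox]
  split_ifs with h1 h2 h3
  · exact_mod_cast (by norm_num : (-1:ℝ) < 1)
  · exact EReal.coe_lt_top 1
  · exact EReal.bot_lt_coe (-1)
  · exact bot_lt_top

lemma withExt_fullDim {d : ℕ} {𝒯 : Finset (Box d)} (hT : IsTiling 𝒯) :
    ∀ C ∈ withExt 𝒯, C.FullDim := by
  intro C hC
  rcases Finset.mem_union.mp hC with h | h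
  · exact hT.1 C h
  · obtain ⟨q, -, rfl⟩ := Finset.mem_image.mp h
    exact extBox_fullDim q.1 q.2

lemma memExtBoxes {d : ℕ} (i : Fin d) (s : Bool) : extBox d i s ∈ extBoxes d :=
  Finset.mem_image.mpr ⟨(i, s), Finset.mem_univ _, rfl⟩

lemma withExt_cover {d : ℕ} {𝒯 : Finset (Box d)} (hT : IsTiling 𝒯) (x : Fin d → ℝ) :
    ∃ C ∈ withExt 𝒯, C.mem x := by
  by_cases hx : x ∈ cube d
  · obtain ⟨B, hB, hmem⟩ := hT.2.2.2 x hx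
    exact ⟨B, Finset.mem_union_left _ hB, hmem⟩
  · simp only [cube, Set.mem_setOf_eq, not_forall] at hx
    obtain ⟨k0, hk0⟩ := hx
    set S := Finset.univ.filter (fun k : Fin d => ¬(-1 ≤ x k ∧ x k ≤ 1)) with hSdef
    have hS : S.Nonempty := ⟨k0, Finset.mem_filter.mpr ⟨Finset.mem_univ _, hk0⟩⟩
    set k := S.min' hS with hkdef
    have hkS : k ∈ S := Finset.min'_mem _ _
    have hsmall : ∀ m, m < k → (-1 ≤ x m ∧ x m ≤ 1) := by
      intro m hm
      by_contra h
      exact absurd (Finset.min'_le S m (Finset.mem_filter.mpr ⟨Finset.mem_univ _, h⟩)) (not_le.mpr hm)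
    have hbad : ¬(-1 ≤ x k ∧ x k ≤ 1) := (Finset.mem_filter.mp hkS).2
    rcases not_and_or.mp hbad with h1 | h2
    · have hxk : x k < -1 := not_le.mp h1
      refine ⟨extBox d k false, Finset.mem_union_right _ (memExtBoxes k false), ?_⟩
      intro m
      simp only [extBox]
      split_ifs with h1' h2' h3'
      · exact ⟨EReal.coe_le_coe_iff.mpr (hsmall m h1').1, EReal.coe_le_coe_iff.mpr (hsmall m h1').2⟩
      · exact absurd h3' (by simp)
      · exact ⟨bot_le, by rw [h2']; exact EReal.coe_le_coe_iff.mpr (le_of_lt hxk)⟩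
      · exact ⟨bot_le, le_top⟩
    · have hxk : (1:ℝ) < x k := not_le.mp h2
      refine ⟨extBox d k true, Finset.mem_union_right _ (memExtBoxes k true), ?_⟩
      intro m
      simp only [extBox]
      split_ifs with h1' h2'
      · exact ⟨EReal.coe_le_coe_iff.mpr (hsmall m h1').1, EReal.coe_le_coe_iff.mpr (hsmall m h1').2⟩
      · exact ⟨by rw [h2']; exact EReal.coe_le_coe_iff.mpr (le_of_lt hxk), le_top⟩
      · exact ⟨bot_le, le_top⟩

lemma interior_subset_toSet {d : ℕ} (B : Box d) : B.interior ⊆ B.toSet := by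
  intro x hx k
  exact ⟨le_of_lt (hx k).1, le_of_lt (hx k).2⟩

lemma ext_interior_coord {d : ℕ} {a : Fin d} {sa : Bool} {x : Fin d → ℝ}
    (hx : x ∈ (extBox d a sa).interior) : if sa then 1 < x a else x a < -1 := by
  have h := hx a
  simp only [extBox, lt_self_iff_false, if_false, eq_self_iff_true, if_true] at h
  cases sa with
  | false =>
    simp only [Bool.false_eq_true, if_false] at h ⊢
    exact EReal.coe_lt_coe_iff.mp h.2
  | true =>
    simp only [if_true] at h ⊢
    exact EReal.coe_lt_coe_iff.mp h.1

lemma ext_interior_low {d : ℕ} {a m : Fin d} {sa : Bool} {x : Fin d → ℝ}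
    (hm : m < a) (hx : x ∈ (extBox d a sa).interior) : -1 < x m ∧ x m < 1 := by
  have h := hx m
  simp only [extBox] at h
  rw [if_pos hm, if_pos hm] at h
  exact ⟨EReal.coe_lt_coe_iff.mp h.1, EReal.coe_lt_coe_iff.mp h.2⟩

lemma ext_not_cube {d : ℕ} {a : Fin d} {sa : Bool} {x : Fin d → ℝ}
    (hx : x ∈ (extBox d a sa).interior) : x ∉ cube d := by
  intro hc
  have h := ext_interior_coord hx
  have hca := hc a
  cases sa
  · simp only [Bool.false_eq_true, if_false] at h
    linarith [hca.1]
  · simp only [if_true] at h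
    linarith [hca.2]

lemma withExt_interior_disj {d : ℕ} {𝒯 : Finset (Box d)} (hT : IsTiling 𝒯)
    {C D : Box d} (hC : C ∈ withExt 𝒯) (hD : D ∈ withExt 𝒯) (hne : C ≠ D)
    {x : Fin d → ℝ} (hxC : x ∈ C.interior) (hxD : x ∈ D.interior) : False := by
  rcases Finset.mem_union.mp hC with hC1 | hC2 <;> rcases Finset.mem_union.mp hD with hD1 | hD2
  · have h := hT.2.2.1 C hC1 D hD1 hne
    rw [Set.eq_empty_iff_forall_notMem] at h
    exact h x ⟨hxC, hxD⟩
  · obtain ⟨⟨b, sb⟩, -, rfl⟩ := Finset.mem_image.mp hD2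
    exact ext_not_cube hxD (hT.2.1 C hC1 (interior_subset_toSet C hxC))
  · obtain ⟨⟨a, sa⟩, -, rfl⟩ := Finset.mem_image.mp hC2
    exact ext_not_cube hxC (hT.2.1 D hD1 (interior_subset_toSet D hxD))
  · obtain ⟨⟨a, sa⟩, -, rfl⟩ := Finset.mem_image.mp hC2
    obtain ⟨⟨b, sb⟩, -, rfl⟩ := Finset.mem_image.mp hD2
    rcases lt_trichotomy a b with hab | hab | hab
    · have h1 := ext_interior_low hab hxD
      have h2 := ext_interior_coord hxC
      cases sa
      · simp only [Bool.false_eq_true, if_false] at h2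
        linarith [h1.1]
      · simp only [if_true] at h2
        linarith [h1.2]
    · subst hab
      have h2 := ext_interior_coord hxC
      have h3 := ext_interior_coord hxD
      cases sa <;> cases sb
      · exact hne rfl
      · simp only [Bool.false_eq_true, if_false, if_true] at h2 h3
        linarith
      · simp only [Bool.false_eq_true, if_false, if_true] at h2 h3
        linarith
      · exact hne rfl
    · have h1 := ext_interior_low hab hxC
      have h2 := ext_interior_coord hxD
      cases sb
      · simp only [Bool.false_eq_true, if_false] at h2
        linarith [h1.1]
      · simp only [if_true] at h2
        linarith [h1.2]

lemma tiling_lo_ne_bot {d : ℕ} {𝒯 : Finset (Box d)} (hT : IsTiling 𝒯) {A : Box d} (hA : A ∈ 𝒯)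
    {q : Fin d → ℝ} (hq : A.mem q) (k : Fin d) : A.lo k ≠ ⊥ := by
  intro hbot
  have hcube : q ∈ cube d := hT.2.1 A hA hq
  have hq' : A.mem (Function.update q k (-2)) := by
    intro m
    by_cases hm : m = k
    · subst hm
      rw [Function.update_self, hbot]
      refine ⟨bot_le, ?_⟩
      calc ((-2:ℝ):EReal) ≤ ((q m : ℝ):EReal) :=
            EReal.coe_le_coe_iff.mpr (by linarith [(hcube m).1])
        _ ≤ A.hi m := (hq m).2
    · rw [Function.update_of_ne hm]
      exact hq m
  have hc := hT.2.1 A hA hq'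
  have h2 := (hc k).1
  rw [Function.update_self] at h2
  linarith

lemma touch_ext_ext {d : ℕ} {a b : Fin d} {sa sb : Bool} {k : Fin d}
    (h : Touch (extBox d a sa) (extBox d b sb) k) : (k = a ∧ a < b) ∨ (k = b ∧ b < a) := by
  obtain ⟨-, heq⟩ := h
  simp only [extBox] at heq
  have hne11 : ¬(((-1:ℝ):EReal) = ((1:ℝ):EReal)) := by
    intro h
    have h' : (-1:ℝ) = 1 := by exact_mod_cast h
    norm_num at h'
  rcases lt_trichotomy k a with h1 | h1 | h1 <;> rcases lt_trichotomy k b with h2 | h2 | h2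
  · exfalso
    simp only [h1, h2, if_true] at heq
    rw [max_self, min_self] at heq
    exact hne11 heq
  · exact Or.inr ⟨h2, h2 ▸ h1⟩
  · exfalso
    simp only [h1, if_true, lt_asymm h2, ne_of_gt h2, if_false] at heq
    rw [max_eq_left bot_le, min_eq_left le_top] at heq
    exact hne11 heq
  · exact Or.inl ⟨h1, h1 ▸ h2⟩
  · exfalso
    subst h1
    subst h2
    simp only [lt_self_iff_false, if_false, eq_self_iff_true, if_true] at heq
    cases sa <;> cases sb <;>
      simp only [Bool.false_eq_true, if_false, if_true] at heq
    · rw [max_self, min_self] at heq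
      exact (EReal.coe_ne_bot (-1)) heq.symm
    · rw [max_eq_right bot_le, min_eq_left le_top] at heq
      exact hne11 heq.symm
    · rw [max_eq_left bot_le, min_eq_right le_top] at heq
      exact hne11 heq.symm
    · rw [max_self, min_self] at heq
      exact (EReal.coe_ne_top 1) heq
  · exfalso
    subst h1
    simp only [lt_self_iff_false, if_false, eq_self_iff_true, if_true,
      lt_asymm h2, ne_of_gt h2] at heq
    rw [max_eq_left bot_le, min_eq_left le_top] at heq
    cases sa <;> simp only [Bool.false_eq_true, if_false, if_true] at heq
    · exact (EReal.coe_ne_bot (-1)) heq.symm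
    · exact (EReal.coe_ne_top 1) heq
  · exfalso
    simp only [lt_asymm h1, ne_of_gt h1, if_false, h2, if_true] at heq
    rw [max_eq_right bot_le, min_eq_right le_top] at heq
    exact hne11 heq
  · exfalso
    subst h2
    simp only [lt_asymm h1, ne_of_gt h1, if_false, lt_self_iff_false,
      eq_self_iff_true, if_true] at heq
    rw [max_eq_right bot_le, min_eq_right le_top] at heq
    cases sb <;> simp only [Bool.false_eq_true, if_false, if_true] at heq
    · exact (EReal.coe_ne_bot (-1)) heq.symm
    · exact (EReal.coe_ne_top 1) heq
  · exfalso
    simp only [lt_asymm h1, ne_of_gt h1, lt_asymm h2, ne_of_gt h2, if_false] at heq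
    rw [max_self, min_self] at heq
    exact bot_ne_top heq

lemma not_two_touch_ext {d : ℕ} {a b : Fin d} {sa sb : Bool} {i j : Fin d} (hij : i ≠ j)
    (hi : Touch (extBox d a sa) (extBox d b sb) i)
    (hj : Touch (extBox d a sa) (extBox d b sb) j) : False := by
  rcases touch_ext_ext hi with ⟨rfl, hab⟩ | ⟨rfl, hab⟩ <;>
    rcases touch_ext_ext hj with ⟨rfl, hab'⟩ | ⟨rfl, hab'⟩
  · exact hij rfl
  · exact absurd hab' (asymm hab)
  · exact absurd hab' (asymm hab)
  · exact hij rfl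

def egap (e : EReal) (x : ℝ) : ℝ :=
  if e = ⊥ ∨ e = ⊤ ∨ e = (x:EReal) then 1 else |e.toReal - x|

lemma egap_pos (e : EReal) (x : ℝ) : 0 < egap e x := by
  rw [egap]
  split_ifs with h
  · norm_num
  · push_neg at h
    obtain ⟨h1, h2, h3⟩ := h
    apply abs_pos.mpr
    apply sub_ne_zero.mpr
    intro hr
    apply h3
    rw [← hr]
    exact (EReal.coe_toReal h2 h1).symm

lemma egap_block {e : EReal} {x ε : ℝ} (hε : 0 < ε) (hle : ε ≤ egap e x / 2)
    (hne : e ≠ (x:EReal)) (h1 : ((x - ε:ℝ):EReal) ≤ e) (h2 : e ≤ ((x + ε:ℝ):EReal)) : False := by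
  by_cases hbot : e = ⊥
  · rw [hbot] at h1
    exact absurd h1 (not_le.mpr (EReal.bot_lt_coe _))
  by_cases htop : e = ⊤
  · rw [htop] at h2
    exact absurd h2 (not_le.mpr (EReal.coe_lt_top _))
  obtain ⟨r, rfl⟩ : ∃ r : ℝ, e = (r:EReal) := ⟨e.toReal, (EReal.coe_toReal htop hbot).symm⟩
  have hr1 : x - ε ≤ r := EReal.coe_le_coe_iff.mp h1
  have hr2 : r ≤ x + ε := EReal.coe_le_coe_iff.mp h2
  have hrx : r ≠ x := fun hh => hne (by exact_mod_cast hh)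
  have hg : egap (r:EReal) x = |r - x| := by
    rw [egap, if_neg (by push_neg; exact ⟨EReal.coe_ne_bot r, EReal.coe_ne_top r, hne⟩),
      EReal.toReal_coe]
  rw [hg] at hle
  have hpos : 0 < |r - x| := abs_pos.mpr (sub_ne_zero.mpr hrx)
  have habs : |r - x| ≤ ε := abs_le.mpr ⟨by linarith, by linarith⟩
  linarith

def ACompat {d : ℕ} (sg : Fin d → Option Bool) (τ : Fin d → Bool) : Prop :=
  ∀ m b, sg m = some b → τ m = b

lemma comb_all {d : ℕ} {α : Type*} (Φ : (Fin d → Bool) → α) (sg : α → Fin d → Option Bool)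
    (H1 : ∀ τ, ACompat (sg (Φ τ)) τ)
    (H2 : ∀ τ τ', ACompat (sg (Φ τ)) τ' → Φ τ' = Φ τ)
    (s : Finset (Fin d)) (z τa τb : Fin d → Bool) (i j : Fin d)
    (hi : i ∈ s) (hj : j ∈ s) (hij : i ≠ j)
    (hza : ∀ m, m ∉ s → τa m = z m) (hzb : ∀ m, m ∉ s → τb m = z m)
    (hall : ∀ k ∈ s, ∃ bk, sg (Φ τa) k = some bk ∧ sg (Φ τb) k = some (!bk)) :
    s.card + 2 ≤ ((Finset.univ.filter fun τ => ∀ m, m ∉ s → τ m = z m).image Φ).card := by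
  classical
  set Q := Finset.univ.filter fun τ : Fin d → Bool => ∀ m, m ∉ s → τ m = z m with hQ
  have hak : ∀ k ∈ s, sg (Φ τa) k = some (τa k) := by
    intro k hk
    obtain ⟨bk, h1, _⟩ := hall k hk
    rw [h1, H1 τa k bk h1]
  have hbk : ∀ k ∈ s, sg (Φ τb) k = some (!(τa k)) := by
    intro k hk
    obtain ⟨bk, h1, h2⟩ := hall k hk
    rw [h2, H1 τa k bk h1]
  set w : Fin d → (Fin d → Bool) := fun k => Function.update τa k (!(τa k)) with hw
  have hwQ : ∀ k ∈ s, w k ∈ Q := by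
    intro k hk
    simp only [hQ, Finset.mem_filter, Finset.mem_univ, true_and]
    intro m hm
    have hmk : m ≠ k := fun h => hm (h ▸ hk)
    rw [hw]
    simp only [Function.update_of_ne hmk]
    exact hza m hm
  have hτaQ : τa ∈ Q := by
    simp only [hQ, Finset.mem_filter, Finset.mem_univ, true_and]; exact hza
  have hτbQ : τb ∈ Q := by
    simp only [hQ, Finset.mem_filter, Finset.mem_univ, true_and]; exact hzb
  have hDa : ∀ k ∈ s, Φ (w k) ≠ Φ τa := by
    intro k hk heq
    have h := H1 (w k) k (τa k) (by rw [heq]; exact hak k hk)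
    rw [hw] at h
    simp only [Function.update_self] at h
    exact Bool.not_ne_self (τa k) (by rw [h])
  have hDb : ∀ k ∈ s, Φ (w k) ≠ Φ τb := by
    intro k hk heq
    obtain ⟨l, hl, hlk⟩ : ∃ l ∈ s, l ≠ k := by
      by_cases hki : k = i
      · exact ⟨j, hj, by rw [hki]; exact hij.symm⟩
      · exact ⟨i, hi, fun h => hki h.symm⟩
    have h := H1 (w k) l (!(τa l)) (by rw [heq]; exact hbk l hl)
    rw [hw] at h
    simp only [Function.update_of_ne hlk] at h
    exact Bool.not_ne_self (τa l) (by rw [← h])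
  have hinj : Set.InjOn (fun k => Φ (w k)) ↑s := by
    intro k hk l hl hkl
    simp only at hkl
    by_contra hne
    have hCk : sg (Φ (w k)) k = none := by
      cases hsg : sg (Φ (w k)) k with
      | none => rfl
      | some b =>
        exfalso
        have e1 := H1 (w k) k b hsg
        have e2 := H1 (w l) k b (by rw [← hkl]; exact hsg)
        rw [hw] at e1 e2
        simp only [Function.update_self] at e1
        simp only [Function.update_of_ne (fun h => hne (h ▸ rfl) : k ≠ l)] at e2
        rw [← e1] at e2
        exact Bool.not_ne_self (τa k) e2.symm
    have hcomp : ACompat (sg (Φ (w k))) τa := by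
      intro m b hm
      by_cases hmk : m = k
      · rw [hmk, hCk] at hm; cases hm
      · have h2 := H1 (w k) m b hm
        rw [hw] at h2
        simp only [Function.update_of_ne hmk] at h2
        exact h2
    exact hDa k hk (H2 (w k) τa hcomp).symm
  have habne : Φ τa ≠ Φ τb := by
    intro h
    have h1 := hak i hi
    have h2 := hbk i hi
    rw [h] at h1
    rw [h1] at h2
    simp only [Option.some.injEq] at h2
    exact Bool.not_ne_self (τa i) h2.symm
  have hsub : insert (Φ τa) (insert (Φ τb) (s.image fun k => Φ (w k))) ⊆ Q.image Φ := by
    intro x hx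
    simp only [Finset.mem_insert, Finset.mem_image] at hx
    rcases hx with rfl | rfl | ⟨k, hk, rfl⟩
    · exact Finset.mem_image_of_mem Φ hτaQ
    · exact Finset.mem_image_of_mem Φ hτbQ
    · exact Finset.mem_image_of_mem Φ (hwQ k hk)
  have hnb : Φ τb ∉ s.image fun k => Φ (w k) := by
    simp only [Finset.mem_image, not_exists]
    rintro k ⟨hk, heq⟩
    exact hDb k hk heq
  have hna : Φ τa ∉ insert (Φ τb) (s.image fun k => Φ (w k)) := by
    simp only [Finset.mem_insert, Finset.mem_image, not_or, not_exists]
    refine ⟨habne, ?_⟩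
    rintro k ⟨hk, heq⟩
    exact hDa k hk heq
  have hcard : (insert (Φ τa) (insert (Φ τb) (s.image fun k => Φ (w k)))).card = s.card + 2 := by
    rw [Finset.card_insert_of_notMem hna, Finset.card_insert_of_notMem hnb,
      Finset.card_image_of_injOn hinj]
  rw [← hcard]
  exact Finset.card_le_card hsub

lemma comb_step {d : ℕ} {α : Type*} (Φ : (Fin d → Bool) → α) (sg : α → Fin d → Option Bool)
    (H1 : ∀ τ, ACompat (sg (Φ τ)) τ)
    (H2 : ∀ τ τ', ACompat (sg (Φ τ)) τ' → Φ τ' = Φ τ)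
    (n : ℕ)
    (IH : ∀ (s : Finset (Fin d)) (_ : s.card = n) (z τa τb : Fin d → Bool) (i j : Fin d)
      (_ : i ∈ s) (_ : j ∈ s) (_ : i ≠ j)
      (_ : ∀ m, m ∉ s → τa m = z m) (_ : ∀ m, m ∉ s → τb m = z m)
      (_ : ∀ m ∈ s, sg (Φ τa) m = some true ∨ sg (Φ τb) m = some true)
      (_ : ∃ bi, sg (Φ τa) i = some bi ∧ sg (Φ τb) i = some (!bi))
      (_ : ∃ bj, sg (Φ τa) j = some bj ∧ sg (Φ τb) j = some (!bj)),
      n + 2 ≤ ((Finset.univ.filter fun τ => ∀ m, m ∉ s → τ m = z m).image Φ).card)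
    (s : Finset (Fin d)) (hcard : s.card = n + 1) (z τa τb : Fin d → Bool) (i j : Fin d)
    (hi : i ∈ s) (hj : j ∈ s) (hij : i ≠ j)
    (hza : ∀ m, m ∉ s → τa m = z m) (hzb : ∀ m, m ∉ s → τb m = z m)
    (hab : ∀ m ∈ s, sg (Φ τa) m = some true ∨ sg (Φ τb) m = some true)
    (hci : ∃ bi, sg (Φ τa) i = some bi ∧ sg (Φ τb) i = some (!bi))
    (hcj : ∃ bj, sg (Φ τa) j = some bj ∧ sg (Φ τb) j = some (!bj))
    (k : Fin d) (hk : k ∈ s) (hki : k ≠ i) (hkj : k ≠ j)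
    (ha : sg (Φ τa) k = some true) (hbnf : sg (Φ τb) k ≠ some false) :
    n + 1 + 2 ≤ ((Finset.univ.filter fun τ => ∀ m, m ∉ s → τ m = z m).image Φ).card := by
  classical
  set s' := s.erase k with hs'def
  set z' := Function.update z k true with hz'def
  set x' := Function.update τa k true with hx'def
  set y' := Function.update τb k true with hy'def
  have hs' : s'.card = n := by rw [hs'def, Finset.card_erase_of_mem hk, hcard]; rfl
  have hΦx' : Φ x' = Φ τa := by
    apply H2
    intro m b hm
    by_cases hmk : m = k
    · subst hmk
      rw [ha] at hm
      cases hm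
      rw [hx'def, Function.update_self]
    · rw [hx'def, Function.update_of_ne hmk]
      exact H1 τa m b hm
  have hΦy' : Φ y' = Φ τb := by
    apply H2
    intro m b hm
    by_cases hmk : m = k
    · subst hmk
      rw [hy'def, Function.update_self]
      cases b with
      | true => rfl
      | false => exact absurd hm hbnf
    · rw [hy'def, Function.update_of_ne hmk]
      exact H1 τb m b hm
  have hza' : ∀ m, m ∉ s' → x' m = z' m := by
    intro m hm
    by_cases hmk : m = k
    · subst hmk
      rw [hx'def, hz'def, Function.update_self, Function.update_self]
    · have hms : m ∉ s := by
        intro hms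
        exact hm (Finset.mem_erase.mpr ⟨hmk, hms⟩)
      rw [hx'def, hz'def, Function.update_of_ne hmk, Function.update_of_ne hmk]
      exact hza m hms
  have hzb' : ∀ m, m ∉ s' → y' m = z' m := by
    intro m hm
    by_cases hmk : m = k
    · subst hmk
      rw [hy'def, hz'def, Function.update_self, Function.update_self]
    · have hms : m ∉ s := by
        intro hms
        exact hm (Finset.mem_erase.mpr ⟨hmk, hms⟩)
      rw [hy'def, hz'def, Function.update_of_ne hmk, Function.update_of_ne hmk]
      exact hzb m hms
  have hIH := IH s' hs' z' x' y' i j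
    (Finset.mem_erase.mpr ⟨fun h => hki h.symm, hi⟩)
    (Finset.mem_erase.mpr ⟨fun h => hkj h.symm, hj⟩) hij hza' hzb'
    (by rw [hΦx', hΦy']; exact fun m hm => hab m (Finset.mem_of_mem_erase hm))
    (by rw [hΦx', hΦy']; exact hci)
    (by rw [hΦx', hΦy']; exact hcj)
  set τ₀ := Function.update τa k false with hτ₀def
  have hτ₀ne : ∀ m, m ≠ k → τ₀ m = τa m := by
    intro m hm
    rw [hτ₀def, Function.update_of_ne hm]
  have hsgC : sg (Φ τ₀) k = some false := by
    cases hsg : sg (Φ τ₀) k with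
    | some b =>
      have h := H1 τ₀ k b hsg
      rw [hτ₀def, Function.update_self] at h
      rw [← h]
    | none =>
      exfalso
      have hcomp : ACompat (sg (Φ τ₀)) x' := by
        intro m b hm
        by_cases hmk : m = k
        · subst hmk
          rw [hsg] at hm
          cases hm
        · rw [hx'def, Function.update_of_ne hmk, ← hτ₀ne m hmk]
          exact H1 τ₀ m b hm
      have h3 := H2 τ₀ x' hcomp
      rw [← h3, hΦx'] at hsg  -- wrong direction? fix below
      rw [ha] at hsg
      cases hsg
  have hCQ : Φ τ₀ ∈ (Finset.univ.filter fun τ => ∀ m, m ∉ s → τ m = z m).image Φ := by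
    apply Finset.mem_image_of_mem
    simp only [Finset.mem_filter, Finset.mem_univ, true_and]
    intro m hm
    have hmk : m ≠ k := fun h => hm (h ▸ hk)
    rw [hτ₀ne m hmk]
    exact hza m hm
  have hCnot : Φ τ₀ ∉ (Finset.univ.filter fun τ => ∀ m, m ∉ s' → τ m = z' m).image Φ := by
    intro hmem
    obtain ⟨τ', hτ'Q, heq⟩ := Finset.mem_image.mp hmem
    simp only [Finset.mem_filter, Finset.mem_univ, true_and] at hτ'Q
    have hknots' : k ∉ s' := Finset.notMem_erase k s
    have hτ'k : τ' k = true := by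
      rw [hτ'Q k hknots', hz'def, Function.update_self]
    have := H1 τ' k false (by rw [heq]; exact hsgC)
    rw [hτ'k] at this
    cases this
  have hsub : (Finset.univ.filter fun τ => ∀ m, m ∉ s' → τ m = z' m).image Φ ⊆
      (Finset.univ.filter fun τ => ∀ m, m ∉ s → τ m = z m).image Φ := by
    apply Finset.image_subset_image
    intro τ hτ
    simp only [Finset.mem_filter, Finset.mem_univ, true_and] at hτ ⊢
    intro m hm
    have hmk : m ≠ k := fun h => hm (h ▸ hk)
    have hms' : m ∉ s' := fun h => hm (Finset.mem_of_mem_erase h)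
    rw [hτ m hms', hz'def, Function.update_of_ne hmk]
  calc n + 1 + 2 = (n + 2) + 1 := by ring
    _ ≤ ((Finset.univ.filter fun τ => ∀ m, m ∉ s' → τ m = z' m).image Φ).card + 1 :=
        Nat.add_le_add_right hIH 1
    _ = (insert (Φ τ₀) ((Finset.univ.filter fun τ => ∀ m, m ∉ s' → τ m = z' m).image Φ)).card :=
        (Finset.card_insert_of_notMem hCnot).symm
    _ ≤ _ := Finset.card_le_card (Finset.insert_subset hCQ hsub)

lemma comb {d : ℕ} {α : Type*} (Φ : (Fin d → Bool) → α) (sg : α → Fin d → Option Bool)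
    (H1 : ∀ τ, ACompat (sg (Φ τ)) τ)
    (H2 : ∀ τ τ', ACompat (sg (Φ τ)) τ' → Φ τ' = Φ τ) :
    ∀ (n : ℕ) (s : Finset (Fin d)) (_ : s.card = n) (z τa τb : Fin d → Bool) (i j : Fin d)
      (_ : i ∈ s) (_ : j ∈ s) (_ : i ≠ j)
      (_ : ∀ m, m ∉ s → τa m = z m) (_ : ∀ m, m ∉ s → τb m = z m)
      (_ : ∀ m ∈ s, sg (Φ τa) m = some true ∨ sg (Φ τb) m = some true)
      (_ : ∃ bi, sg (Φ τa) i = some bi ∧ sg (Φ τb) i = some (!bi))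
      (_ : ∃ bj, sg (Φ τa) j = some bj ∧ sg (Φ τb) j = some (!bj)),
      n + 2 ≤ ((Finset.univ.filter fun τ => ∀ m, m ∉ s → τ m = z m).image Φ).card := by
  intro n
  induction n with
  | zero =>
    intro s hcard z τa τb i j hi hj _ _ _ _ _ _
    rw [Finset.card_eq_zero] at hcard
    subst hcard
    cases hi
  | succ n IH =>
    intro s hcard z τa τb i j hi hj hij hza hzb hab hci hcj
    by_cases hall : ∀ k ∈ s, ∃ bk, sg (Φ τa) k = some bk ∧ sg (Φ τb) k = some (!bk)
    · have h := comb_all Φ sg H1 H2 s z τa τb i j hi hj hij hza hzb hall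
      rwa [hcard] at h
    · push_neg at hall
      obtain ⟨k, hk, hnc⟩ := hall
      have hki : k ≠ i := by
        rintro rfl
        obtain ⟨bi, h1, h2⟩ := hci
        exact hnc bi h1 h2
      have hkj : k ≠ j := by
        rintro rfl
        obtain ⟨bj, h1, h2⟩ := hcj
        exact hnc bj h1 h2
      rcases hab k hk with ha | hb
      · have hbnf : sg (Φ τb) k ≠ some false := hnc true ha
        exact comb_step Φ sg H1 H2 n IH s hcard z τa τb i j hi hj hij hza hzb hab hci hcj
          k hk hki hkj ha hbnf
      · have hanf : sg (Φ τa) k ≠ some false := by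
          intro h
          exact hnc false h hb
        have hab' : ∀ m ∈ s, sg (Φ τb) m = some true ∨ sg (Φ τa) m = some true :=
          fun m hm => (hab m hm).symm
        have hci' : ∃ bi, sg (Φ τb) i = some bi ∧ sg (Φ τa) i = some (!bi) := by
          obtain ⟨bi, h1, h2⟩ := hci
          exact ⟨!bi, h2, by rw [Bool.not_not]; exact h1⟩
        have hcj' : ∃ bj, sg (Φ τb) j = some bj ∧ sg (Φ τa) j = some (!bj) := by
          obtain ⟨bj, h1, h2⟩ := hcj
          exact ⟨!bj, h2, by rw [Bool.not_not]; exact h1⟩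
        exact comb_step Φ sg H1 H2 n IH s hcard z τb τa i j hi hj hij hzb hza hab' hci' hcj'
          k hk hki hkj hb hanf

lemma key {d : ℕ} (𝒯 : Finset (Box d)) (hT : IsTiling 𝒯)
    (A B : Box d) (hA : A ∈ withExt 𝒯) (hB : B ∈ withExt 𝒯) (hAT : A ∈ 𝒯)
    (hint : Intersects A B)
    (i j : Fin d) (hij : i ≠ j) (ti : Touch A B i) (tj : Touch A B j) :
    ∃ p ∈ A.toSet ∩ B.toSet,
      d + 2 ≤ ((withExt 𝒯).filter fun C => C.mem p).card := by
  classical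
  obtain ⟨q, hqA, hqB⟩ := hint
  have hAfd : A.FullDim := withExt_fullDim hT A hA
  have hBfd : B.FullDim := withExt_fullDim hT B hB
  have hmax_ne_bot : ∀ k, max (A.lo k) (B.lo k) ≠ ⊥ := by
    intro k h
    exact tiling_lo_ne_bot hT hAT hqA k (max_eq_bot.mp h).1
  have hmax_ne_top : ∀ k, max (A.lo k) (B.lo k) ≠ ⊤ := by
    intro k h
    have hle : max (A.lo k) (B.lo k) ≤ ((q k : ℝ) : EReal) := max_le (hqA k).1 (hqB k).1
    rw [h] at hle
    exact absurd hle (not_le.mpr (EReal.coe_lt_top (q k)))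
  set p : Fin d → ℝ := fun k => (max (A.lo k) (B.lo k)).toReal with hpdef
  have hp : ∀ k, ((p k : ℝ) : EReal) = max (A.lo k) (B.lo k) := fun k =>
    EReal.coe_toReal (hmax_ne_top k) (hmax_ne_bot k)
  have hpA : A.mem p := by
    intro k
    constructor
    · rw [hp k]; exact le_max_left _ _
    · rw [hp k]; exact le_trans (max_le (hqA k).1 (hqB k).1) (hqA k).2
  have hpB : B.mem p := by
    intro k
    constructor
    · rw [hp k]; exact le_max_right _ _
    · rw [hp k]; exact le_trans (max_le (hqA k).1 (hqB k).1) (hqB k).2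
  -- the scale ε
  set W := withExt 𝒯 with hWdef
  set G : Finset ℝ := insert 1
    (((W ×ˢ (Finset.univ : Finset (Fin d))).image fun r => egap (r.1.lo r.2) (p r.2)) ∪
     ((W ×ˢ (Finset.univ : Finset (Fin d))).image fun r => egap (r.1.hi r.2) (p r.2))) with hGdef
  have hGne : G.Nonempty := ⟨1, Finset.mem_insert_self _ _⟩
  set ε := G.min' hGne / 2 with hεdef
  have hεpos : 0 < ε := by
    apply div_pos _ (by norm_num : (0:ℝ) < 2)
    rw [Finset.lt_min'_iff]
    intro y hy
    rcases Finset.mem_insert.mp hy with rfl | hy'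
    · norm_num
    · rcases Finset.mem_union.mp hy' with hy2 | hy2 <;>
        · obtain ⟨r, -, rfl⟩ := Finset.mem_image.mp hy2
          exact egap_pos _ _
  have hεle : ∀ C ∈ W, ∀ k : Fin d,
      ε ≤ egap (C.lo k) (p k) / 2 ∧ ε ≤ egap (C.hi k) (p k) / 2 := by
    intro C hC k
    have h1 : G.min' hGne ≤ egap (C.lo k) (p k) :=
      Finset.min'_le _ _ (Finset.mem_insert_of_mem (Finset.mem_union_left _
        (Finset.mem_image.mpr ⟨(C, k), Finset.mem_product.mpr ⟨hC, Finset.mem_univ k⟩, rfl⟩)))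
    have h2 : G.min' hGne ≤ egap (C.hi k) (p k) :=
      Finset.min'_le _ _ (Finset.mem_insert_of_mem (Finset.mem_union_right _
        (Finset.mem_image.mpr ⟨(C, k), Finset.mem_product.mpr ⟨hC, Finset.mem_univ k⟩, rfl⟩)))
    rw [hεdef]
    constructor <;> linarith
  have hblockLo : ∀ C ∈ W, ∀ k : Fin d, C.lo k ≠ ((p k : ℝ) : EReal) →
      ¬(((p k - ε : ℝ) : EReal) ≤ C.lo k ∧ C.lo k ≤ ((p k + ε : ℝ) : EReal)) := by
    rintro C hC k hne ⟨h1, h2⟩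
    exact egap_block hεpos (hεle C hC k).1 hne h1 h2
  have hblockHi : ∀ C ∈ W, ∀ k : Fin d, C.hi k ≠ ((p k : ℝ) : EReal) →
      ¬(((p k - ε : ℝ) : EReal) ≤ C.hi k ∧ C.hi k ≤ ((p k + ε : ℝ) : EReal)) := by
    rintro C hC k hne ⟨h1, h2⟩
    exact egap_block hεpos (hεle C hC k).2 hne h1 h2
  -- orthant probe points
  set qpt : (Fin d → Bool) → (Fin d → ℝ) := fun τ k => p k + (if τ k = true then ε else -ε)
    with hqptdef
  have hqval : ∀ (τ : Fin d → Bool) (k : Fin d),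
      (τ k = true → qpt τ k = p k + ε) ∧ (τ k = false → qpt τ k = p k - ε) := by
    intro τ k
    constructor
    · intro h
      rw [hqptdef]
      simp only [h, if_true]
    · intro h
      rw [hqptdef]
      simp only [h, Bool.false_eq_true, if_false]
      ring
  -- compatibility (geometric form)
  have memq_mem_p : ∀ C ∈ W, ∀ τ, C.mem (qpt τ) → C.mem p := by
    intro C hC τ hm k
    have hmk := hm k
    constructor
    · cases hτ : τ k with
      | true =>
        rw [(hqval τ k).1 hτ] at hmk
        by_contra hlt
        have hplo : ((p k : ℝ) : EReal) < C.lo k := not_le.mp hlt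
        apply hblockLo C hC k (ne_of_gt hplo)
        exact ⟨le_trans (EReal.coe_le_coe_iff.mpr (by linarith)) (le_of_lt hplo), hmk.1⟩
      | false =>
        rw [(hqval τ k).2 hτ] at hmk
        exact le_trans hmk.1 (EReal.coe_le_coe_iff.mpr (by linarith))
    · cases hτ : τ k with
      | true =>
        rw [(hqval τ k).1 hτ] at hmk
        exact le_trans (EReal.coe_le_coe_iff.mpr (by linarith)) hmk.2
      | false =>
        rw [(hqval τ k).2 hτ] at hmk
        by_contra hlt
        have hphi : C.hi k < ((p k : ℝ) : EReal) := not_le.mp hlt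
        apply hblockHi C hC k (ne_of_lt hphi)
        exact ⟨hmk.2, le_trans (le_of_lt hphi) (EReal.coe_le_coe_iff.mpr (by linarith))⟩
  have memq_compat : ∀ C ∈ W, ∀ τ, C.mem (qpt τ) → ∀ k : Fin d,
      (τ k = true → C.hi k ≠ ((p k : ℝ) : EReal)) ∧
      (τ k = false → C.lo k ≠ ((p k : ℝ) : EReal)) := by
    intro C hC τ hm k
    constructor
    · intro hτ heq
      have h2 := (hm k).2
      rw [(hqval τ k).1 hτ, heq] at h2
      have := EReal.coe_le_coe_iff.mp h2
      linarith
    · intro hτ heq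
      have h1 := (hm k).1
      rw [(hqval τ k).2 hτ, heq] at h1
      have := EReal.coe_le_coe_iff.mp h1
      linarith
  have mem_compat_interior : ∀ C ∈ W, ∀ τ, C.mem p →
      (∀ k : Fin d, (τ k = true → C.hi k ≠ ((p k : ℝ) : EReal)) ∧
        (τ k = false → C.lo k ≠ ((p k : ℝ) : EReal))) →
      qpt τ ∈ C.interior := by
    intro C hC τ hCp hCc k
    cases hτ : τ k with
    | true =>
      rw [(hqval τ k).1 hτ]
      constructor
      · exact lt_of_le_of_lt (hCp k).1 (EReal.coe_lt_coe_iff.mpr (by linarith))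
      · by_contra hle
        have hle' : C.hi k ≤ ((p k + ε : ℝ) : EReal) := not_lt.mp hle
        apply hblockHi C hC k ((hCc k).1 hτ)
        exact ⟨le_trans (EReal.coe_le_coe_iff.mpr (by linarith)) (hCp k).2, hle'⟩
    | false =>
      rw [(hqval τ k).2 hτ]
      constructor
      · by_contra hle
        have hle' : ((p k - ε : ℝ) : EReal) ≤ C.lo k := not_lt.mp hle
        apply hblockLo C hC k ((hCc k).2 hτ)
        exact ⟨hle', le_trans (hCp k).1 (EReal.coe_le_coe_iff.mpr (by linarith))⟩
      · exact lt_of_lt_of_le (EReal.coe_lt_coe_iff.mpr (by linarith)) (hCp k).2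
  -- the selector Φ
  set Φ : (Fin d → Bool) → Box d := fun τ => Classical.choose (withExt_cover hT (qpt τ))
    with hΦdef
  have hΦspec : ∀ τ, Φ τ ∈ W ∧ (Φ τ).mem (qpt τ) := by
    intro τ
    obtain ⟨h1, h2⟩ := Classical.choose_spec (withExt_cover hT (qpt τ))
    exact ⟨h1, h2⟩
  have hΦp : ∀ τ, (Φ τ).mem p := fun τ => memq_mem_p _ (hΦspec τ).1 τ (hΦspec τ).2
  have hΦc : ∀ τ, ∀ k : Fin d, (τ k = true → (Φ τ).hi k ≠ ((p k : ℝ) : EReal)) ∧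
      (τ k = false → (Φ τ).lo k ≠ ((p k : ℝ) : EReal)) :=
    fun τ => memq_compat _ (hΦspec τ).1 τ (hΦspec τ).2
  have huniq : ∀ τ, ∀ C, C ∈ W → C.mem p →
      (∀ k : Fin d, (τ k = true → C.hi k ≠ ((p k : ℝ) : EReal)) ∧
        (τ k = false → C.lo k ≠ ((p k : ℝ) : EReal))) → C = Φ τ := by
    intro τ C hC hCp hCc
    by_contra hne
    exact withExt_interior_disj hT hC (hΦspec τ).1 hne
      (mem_compat_interior C hC τ hCp hCc)
      (mem_compat_interior _ (hΦspec τ).1 τ (hΦp τ) (hΦc τ))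
  -- abstract signs
  set sg : Box d → Fin d → Option Bool := fun C k =>
    if C.lo k = ((p k : ℝ) : EReal) then some true
    else if C.hi k = ((p k : ℝ) : EReal) then some false else none with hsgdef
  have hlink1 : ∀ (C : Box d), ∀ τ : Fin d → Bool,
      (∀ k : Fin d, (τ k = true → C.hi k ≠ ((p k : ℝ) : EReal)) ∧
        (τ k = false → C.lo k ≠ ((p k : ℝ) : EReal))) → ACompat (sg C) τ := by
    intro C τ hc m b hb
    rw [hsgdef] at hb
    simp only at hb
    by_cases h1 : C.lo m = ((p m : ℝ) : EReal)
    · rw [if_pos h1] at hb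
      cases hb
      cases hτ : τ m with
      | false => exact absurd h1 ((hc m).2 hτ)
      | true => rfl
    · rw [if_neg h1] at hb
      by_cases h2 : C.hi m = ((p m : ℝ) : EReal)
      · rw [if_pos h2] at hb
        cases hb
        cases hτ : τ m with
        | false => rfl
        | true => exact absurd h2 ((hc m).1 hτ)
      · rw [if_neg h2] at hb
        cases hb
  have hlink2 : ∀ (C : Box d), C.FullDim → ∀ τ : Fin d → Bool, ACompat (sg C) τ →
      (∀ k : Fin d, (τ k = true → C.hi k ≠ ((p k : ℝ) : EReal)) ∧
        (τ k = false → C.lo k ≠ ((p k : ℝ) : EReal))) := by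
    intro C hfd τ hc k
    constructor
    · intro hτ heq
      have hlo : C.lo k ≠ ((p k : ℝ) : EReal) := by
        intro h
        have hk := hfd k
        rw [h, heq] at hk
        exact lt_irrefl _ hk
      have hsome : sg C k = some false := by
        rw [hsgdef]
        simp only
        rw [if_neg hlo, if_pos heq]
      have := hc k false hsome
      rw [hτ] at this
      cases this
    · intro hτ heq
      have hsome : sg C k = some true := by
        rw [hsgdef]
        simp only
        rw [if_pos heq]
      have := hc k true hsome
      rw [hτ] at this
      cases this
  have H1 : ∀ τ, ACompat (sg (Φ τ)) τ := fun τ => hlink1 _ τ (hΦc τ)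
  have H2 : ∀ τ τ', ACompat (sg (Φ τ)) τ' → Φ τ' = Φ τ := by
    intro τ τ' hc
    exact (huniq τ' (Φ τ) (hΦspec τ).1 (hΦp τ)
      (hlink2 _ (withExt_fullDim hT _ (hΦspec τ).1) τ' hc)).symm
  -- the two distinguished orthants
  set τa : Fin d → Bool := fun k => if A.lo k = ((p k : ℝ) : EReal) then true else false
    with hτadef
  set τb : Fin d → Bool := fun k => if B.lo k = ((p k : ℝ) : EReal) then true else false
    with hτbdef
  have hAc : ∀ k : Fin d, (τa k = true → A.hi k ≠ ((p k : ℝ) : EReal)) ∧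
      (τa k = false → A.lo k ≠ ((p k : ℝ) : EReal)) := by
    intro k
    constructor
    · intro h heq
      rw [hτadef] at h
      simp only at h
      by_cases hl : A.lo k = ((p k : ℝ) : EReal)
      · have hk := hAfd k
        rw [hl, heq] at hk
        exact lt_irrefl _ hk
      · rw [if_neg hl] at h
        cases h
    · intro h heq
      rw [hτadef] at h
      simp only at h
      rw [if_pos heq] at h
      cases h
  have hBc : ∀ k : Fin d, (τb k = true → B.hi k ≠ ((p k : ℝ) : EReal)) ∧
      (τb k = false → B.lo k ≠ ((p k : ℝ) : EReal)) := by
    intro k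
    constructor
    · intro h heq
      rw [hτbdef] at h
      simp only at h
      by_cases hl : B.lo k = ((p k : ℝ) : EReal)
      · have hk := hBfd k
        rw [hl, heq] at hk
        exact lt_irrefl _ hk
      · rw [if_neg hl] at h
        cases h
    · intro h heq
      rw [hτbdef] at h
      simp only at h
      rw [if_pos heq] at h
      cases h
  have hAeq : A = Φ τa := huniq τa A hA hpA hAc
  have hBeq : B = Φ τb := huniq τb B hB hpB hBc
  have hmaxi : ∀ k : Fin d, A.lo k = ((p k : ℝ) : EReal) ∨ B.lo k = ((p k : ℝ) : EReal) := by
    intro k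
    rcases max_choice (A.lo k) (B.lo k) with h | h
    · left; rw [hp k]; exact h.symm
    · right; rw [hp k]; exact h.symm
  have hab : ∀ m : Fin d, sg (Φ τa) m = some true ∨ sg (Φ τb) m = some true := by
    intro m
    rw [← hAeq, ← hBeq]
    rcases hmaxi m with h | h
    · left
      rw [hsgdef]
      simp only
      rw [if_pos h]
    · right
      rw [hsgdef]
      simp only
      rw [if_pos h]
  have hconf : ∀ k : Fin d, Touch A B k →
      ∃ bk, sg A k = some bk ∧ sg B k = some (!bk) := by
    intro k tk
    have hpk2 : ((p k : ℝ) : EReal) = min (A.hi k) (B.hi k) := by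
      rw [hp k, tk.2]
    have hmins : A.hi k = ((p k : ℝ) : EReal) ∨ B.hi k = ((p k : ℝ) : EReal) := by
      rcases min_choice (A.hi k) (B.hi k) with h | h
      · left; rw [hpk2]; exact h.symm
      · right; rw [hpk2]; exact h.symm
    by_cases hAlo : A.lo k = ((p k : ℝ) : EReal)
    · have hAhi : A.hi k ≠ ((p k : ℝ) : EReal) := by
        intro h
        have hk := hAfd k
        rw [hAlo, h] at hk
        exact lt_irrefl _ hk
      have hBhi : B.hi k = ((p k : ℝ) : EReal) := by
        rcases hmins with h | h
        · exact absurd h hAhi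
        · exact h
      have hBlo : B.lo k ≠ ((p k : ℝ) : EReal) := by
        intro h
        have hk := hBfd k
        rw [h, hBhi] at hk
        exact lt_irrefl _ hk
      refine ⟨true, ?_, ?_⟩
      · rw [hsgdef]; simp only; rw [if_pos hAlo]
      · rw [hsgdef]; simp only [Bool.not_true]; rw [if_neg hBlo, if_pos hBhi]
    · have hBlo : B.lo k = ((p k : ℝ) : EReal) := by
        rcases hmaxi k with h | h
        · exact absurd h hAlo
        · exact h
      have hBhi : B.hi k ≠ ((p k : ℝ) : EReal) := by
        intro h
        have hk := hBfd k
        rw [hBlo, h] at hk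
        exact lt_irrefl _ hk
      have hAhi : A.hi k = ((p k : ℝ) : EReal) := by
        rcases hmins with h | h
        · exact h
        · exact absurd h hBhi
      refine ⟨false, ?_, ?_⟩
      · rw [hsgdef]; simp only; rw [if_neg hAlo, if_pos hAhi]
      · rw [hsgdef]; simp only [Bool.not_false]; rw [if_pos hBlo]
  have hci := hconf i ti
  have hcj := hconf j tj
  have hcomb := comb Φ sg H1 H2 d Finset.univ (Finset.card_fin d) τa τa τb i j
    (Finset.mem_univ i) (Finset.mem_univ j) hij
    (fun m hm => absurd (Finset.mem_univ m) hm)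
    (fun m hm => absurd (Finset.mem_univ m) hm)
    (fun m _ => hab m)
    (by rw [← hAeq, ← hBeq]; exact hci)
    (by rw [← hAeq, ← hBeq]; exact hcj)
  refine ⟨p, ⟨hpA, hpB⟩, ?_⟩
  refine le_trans hcomb (Finset.card_le_card ?_)
  intro x hx
  obtain ⟨τ', -, rfl⟩ := Finset.mem_image.mp hx
  exact Finset.mem_filter.mpr ⟨(hΦspec τ').1, hΦp τ'⟩

/-- In a `d`-tiling `T`, if two boxes `A, B ∈ T ∪ T_ext`
intersect and touch in more than one dimension, then there is a point of
`A ∩ B` contained in at least `d + 2` boxes of `T ∪ T_ext`. -/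
theorem stmt4 (d : ℕ) (𝒯 : Finset (Box d)) (hT : IsTiling 𝒯)
    (A B : Box d) (hA : A ∈ withExt 𝒯) (hB : B ∈ withExt 𝒯)
    (hint : Intersects A B)
    (htouch : ∃ i j : Fin d, i ≠ j ∧ Touch A B i ∧ Touch A B j) :
    ∃ p ∈ A.toSet ∩ B.toSet,
      d + 2 ≤ ((withExt 𝒯).filter fun C => C.mem p).card := by
  obtain ⟨i, j, hij, ti, tj⟩ := htouch
  by_cases hAT : A ∈ 𝒯
  · exact key 𝒯 hT A B hA hB hAT hint i j hij ti tj
  · have hBT : B ∈ 𝒯 := by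
      by_contra hBT
      have hAe : ∃ a sa, A = extBox d a sa := by
        rcases Finset.mem_union.mp hA with h | h
        · exact absurd h hAT
        · obtain ⟨r, -, hr⟩ := Finset.mem_image.mp h
          exact ⟨r.1, r.2, hr.symm⟩
      have hBe : ∃ b sb, B = extBox d b sb := by
        rcases Finset.mem_union.mp hB with h | h
        · exact absurd h hBT
        · obtain ⟨r, -, hr⟩ := Finset.mem_image.mp h
          exact ⟨r.1, r.2, hr.symm⟩
      obtain ⟨a, sa, rfl⟩ := hAe
      obtain ⟨b, sb, rfl⟩ := hBe
      exact not_two_touch_ext hij ti tj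
    have hint' : Intersects B A := by
      obtain ⟨q, h1, h2⟩ := hint
      exact ⟨q, h2, h1⟩
    have ti' : Touch B A i := ⟨hint', by rw [max_comm, min_comm]; exact ti.2⟩
    have tj' : Touch B A j := ⟨hint', by rw [max_comm, min_comm]; exact tj.2⟩
    obtain ⟨p, hp, hcard⟩ := key 𝒯 hT B A hB hA hBT hint' i j hij ti' tj'
    exact ⟨p, ⟨hp.2, hp.1⟩, hcard⟩

end
end

section
/- A d-tiling T is proper if and only if for any two intersecting boxes A, B of T ∪ T_ext we have dim(A ∩ B) = d − 1. -/
/- Common framework: axis-parallel boxes (with extended-real endpoints, to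
accommodate the unbounded exterior boxes of `T_ext`), `d`-tilings of the cube
`[-1,1]^d`, the exterior boxes, proper tilings, slices, cuts, sides and
separations. -/

noncomputable section

open Classical

attribute [local instance] Classical.propDecidable

namespace Stmt6Aux

open Finset

variable {d : ℕ}

lemma ereal_is_real {a : EReal} (h1 : a ≠ ⊥) (h2 : a ≠ ⊤) : ∃ r : ℝ, a = (r : EReal) := by
  induction a using EReal.rec with
  | bot => exact absurd rfl h1
  | coe r => exact ⟨r, rfl⟩
  | top => exact absurd rfl h2

lemma extBox_fullDim (d : ℕ) (i : Fin d) (s : Bool) : (extBox d i s).FullDim := by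
  intro j
  unfold extBox
  dsimp only
  by_cases h1 : j < i
  · simp only [if_pos h1]
    exact EReal.coe_lt_coe_iff.2 (by norm_num)
  · by_cases h2 : j = i
    · simp only [if_neg h1, if_pos h2]
      cases s
      · simpa using EReal.bot_lt_coe (-1 : ℝ)
      · simpa using EReal.coe_lt_top (1 : ℝ)
    · simp only [if_neg h1, if_neg h2]
      exact bot_lt_top

lemma fullDim_of_mem_withExt {𝒯 : Finset (Box d)} (hT : IsTiling 𝒯) {C : Box d}
    (hC : C ∈ withExt 𝒯) : C.FullDim := by
  rcases Finset.mem_union.1 hC with h | h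
  · exact hT.1 C h
  · rcases Finset.mem_image.1 h with ⟨q, _, rfl⟩
    exact extBox_fullDim d q.1 q.2

lemma cover {𝒯 : Finset (Box d)} (hT : IsTiling 𝒯) (q : Fin d → ℝ) :
    ∃ C ∈ withExt 𝒯, C.mem q := by
  by_cases hq : q ∈ cube d
  · obtain ⟨B, hB, hBq⟩ := hT.2.2.2 q hq
    exact ⟨B, Finset.mem_union_left _ hB, hBq⟩
  · have hex : ∃ i, ¬(-1 ≤ q i ∧ q i ≤ 1) := by
      by_contra h
      push_neg at h
      exact hq fun i => h i
    have hsne : (univ.filter (fun i => ¬(-1 ≤ q i ∧ q i ≤ 1))).Nonempty := by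
      obtain ⟨i, hi⟩ := hex
      exact ⟨i, Finset.mem_filter.2 ⟨Finset.mem_univ _, hi⟩⟩
    obtain ⟨i, hi, hjlt⟩ : ∃ i : Fin d, ¬(-1 ≤ q i ∧ q i ≤ 1) ∧ ∀ j, j < i → (-1 ≤ q j ∧ q j ≤ 1) := by
      refine ⟨(univ.filter (fun i => ¬(-1 ≤ q i ∧ q i ≤ 1))).min' hsne,
        (Finset.mem_filter.1 (Finset.min'_mem _ hsne)).2, ?_⟩
      intro j hj
      by_contra hjq
      have hjs : j ∈ univ.filter (fun i => ¬(-1 ≤ q i ∧ q i ≤ 1)) :=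
        Finset.mem_filter.2 ⟨Finset.mem_univ _, hjq⟩
      exact absurd hj (not_lt.2 (Finset.min'_le _ j hjs))
    rcases not_and_or.1 hi with h | h
    · push_neg at h
      refine ⟨extBox d i false, Finset.mem_union_right _ ?_, ?_⟩
      · exact Finset.mem_image.2 ⟨(i, false), Finset.mem_univ _, rfl⟩
      · intro j
        unfold extBox
        dsimp only
        by_cases h1 : j < i
        · simp only [if_pos h1]
          exact ⟨EReal.coe_le_coe_iff.2 (hjlt j h1).1, EReal.coe_le_coe_iff.2 (hjlt j h1).2⟩
        · by_cases h2 : j = i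
          · simp only [if_neg h1, if_pos h2]
            subst h2
            exact ⟨bot_le, EReal.coe_le_coe_iff.2 h.le⟩
          · simp only [if_neg h1, if_neg h2]
            exact ⟨bot_le, le_top⟩
    · push_neg at h
      refine ⟨extBox d i true, Finset.mem_union_right _ ?_, ?_⟩
      · exact Finset.mem_image.2 ⟨(i, true), Finset.mem_univ _, rfl⟩
      · intro j
        unfold extBox
        dsimp only
        by_cases h1 : j < i
        · simp only [if_pos h1]
          exact ⟨EReal.coe_le_coe_iff.2 (hjlt j h1).1, EReal.coe_le_coe_iff.2 (hjlt j h1).2⟩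
        · by_cases h2 : j = i
          · simp only [if_neg h1, if_pos h2]
            subst h2
            exact ⟨EReal.coe_le_coe_iff.2 h.le, le_top⟩
          · simp only [if_neg h1, if_neg h2]
            exact ⟨bot_le, le_top⟩

end Stmt6Aux
namespace Stmt6Aux

open Finset

variable {d : ℕ}

lemma interior_subset_toSet (B : Box d) : B.interior ⊆ B.toSet := by
  intro z hz c
  exact ⟨(hz c).1.le, (hz c).2.le⟩

lemma extBox_interior_true {i : Fin d} {z : Fin d → ℝ}
    (hz : z ∈ (extBox d i true).interior) : 1 < z i := by
  have hci := (hz i).1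
  unfold extBox at hci
  dsimp only at hci
  rw [if_neg (lt_irrefl i), if_pos rfl] at hci
  simp only [if_pos] at hci
  exact_mod_cast hci

lemma extBox_interior_false {i : Fin d} {z : Fin d → ℝ}
    (hz : z ∈ (extBox d i false).interior) : z i < -1 := by
  have hci := (hz i).2
  unfold extBox at hci
  dsimp only at hci
  rw [if_neg (lt_irrefl i), if_pos rfl] at hci
  rw [if_neg Bool.false_ne_true] at hci
  exact_mod_cast hci

lemma extBox_interior_not_cube {i : Fin d} {s : Bool} {z : Fin d → ℝ}
    (hz : z ∈ (extBox d i s).interior) : z ∉ cube d := by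
  intro hcube
  cases s with
  | false => linarith [(hcube i).1, extBox_interior_false hz]
  | true => linarith [(hcube i).2, extBox_interior_true hz]

lemma extBox_interior_mid {i j : Fin d} {s : Bool} {z : Fin d → ℝ} (hij : j < i)
    (hz : z ∈ (extBox d i s).interior) : -1 < z j ∧ z j < 1 := by
  have hcj := hz j
  unfold extBox at hcj
  simp only [if_pos hij] at hcj
  exact ⟨by exact_mod_cast hcj.1, by exact_mod_cast hcj.2⟩

lemma ext_ext_interior_disjoint {i i' : Fin d} {s s' : Bool}
    (hne : extBox d i s ≠ extBox d i' s') {z : Fin d → ℝ}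
    (h1 : z ∈ (extBox d i s).interior) (h2 : z ∈ (extBox d i' s').interior) : False := by
  rcases lt_trichotomy i i' with h | h | h
  · cases s with
    | false => linarith [(extBox_interior_mid h h2).1, extBox_interior_false h1]
    | true => linarith [(extBox_interior_mid h h2).2, extBox_interior_true h1]
  · subst h
    cases s <;> cases s'
    · exact hne rfl
    · linarith [extBox_interior_false h1, extBox_interior_true h2]
    · linarith [extBox_interior_false h2, extBox_interior_true h1]
    · exact hne rfl
  · cases s' with
    | false => linarith [(extBox_interior_mid h h1).1, extBox_interior_false h2]
    | true => linarith [(extBox_interior_mid h h1).2, extBox_interior_true h2]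

lemma interiors_disjoint {𝒯 : Finset (Box d)} (hT : IsTiling 𝒯) {A B : Box d}
    (hA : A ∈ withExt 𝒯) (hB : B ∈ withExt 𝒯) (hne : A ≠ B) {z : Fin d → ℝ}
    (hzA : z ∈ A.interior) (hzB : z ∈ B.interior) : False := by
  rcases Finset.mem_union.1 hA with hA' | hA' <;> rcases Finset.mem_union.1 hB with hB' | hB'
  · have := hT.2.2.1 A hA' B hB' hne
    have hz : z ∈ A.interior ∩ B.interior := ⟨hzA, hzB⟩
    rw [this] at hz
    exact hz
  · rcases Finset.mem_image.1 hB' with ⟨q, _, rfl⟩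
    exact extBox_interior_not_cube hzB (hT.2.1 A hA' (interior_subset_toSet A hzA))
  · rcases Finset.mem_image.1 hA' with ⟨q, _, rfl⟩
    exact extBox_interior_not_cube hzA (hT.2.1 B hB' (interior_subset_toSet B hzB))
  · rcases Finset.mem_image.1 hA' with ⟨q, _, rfl⟩
    rcases Finset.mem_image.1 hB' with ⟨q', _, rfl⟩
    exact ext_ext_interior_disjoint hne hzA hzB

lemma eq_of_all_nondeg {𝒯 : Finset (Box d)} (hT : IsTiling 𝒯) {A B : Box d}
    (hA : A ∈ withExt 𝒯) (hB : B ∈ withExt 𝒯)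
    (h : ∀ c, max (A.lo c) (B.lo c) < min (A.hi c) (B.hi c)) : A = B := by
  by_contra hne
  have hz : ∀ c, ∃ x : ℝ, max (A.lo c) (B.lo c) < (x : EReal) ∧ (x : EReal) < min (A.hi c) (B.hi c) :=
    fun c => EReal.exists_between_coe_real (h c)
  choose z hz1 hz2 using hz
  refine interiors_disjoint hT hA hB hne (z := z) ?_ ?_
  · exact fun c => ⟨lt_of_le_of_lt (le_max_left _ _) (hz1 c),
      lt_of_lt_of_le (hz2 c) (min_le_left _ _)⟩
  · exact fun c => ⟨lt_of_le_of_lt (le_max_right _ _) (hz1 c),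
      lt_of_lt_of_le (hz2 c) (min_le_right _ _)⟩

lemma tile_bounds {𝒯 : Finset (Box d)} (hT : IsTiling 𝒯) {A : Box d} (hA : A ∈ 𝒯)
    {q : Fin d → ℝ} (hq : A.mem q) (c : Fin d) :
    ((-1 : ℝ) : EReal) ≤ A.lo c ∧ A.hi c ≤ ((1 : ℝ) : EReal) := by
  constructor
  · by_contra hcon
    push_neg at hcon
    obtain ⟨y, hy1, hy2⟩ := EReal.exists_between_coe_real hcon
    have hmem : A.mem (Function.update q c (min y (q c))) := by
      intro j
      by_cases hj : j = c
      · subst hj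
        rw [Function.update_self]
        constructor
        · rcases min_cases y (q j) with ⟨hmin, _⟩ | ⟨hmin, _⟩
          · rw [hmin]; exact hy1.le
          · rw [hmin]; exact (hq j).1
        · exact le_trans (EReal.coe_le_coe_iff.2 (min_le_right _ _)) (hq j).2
      · rw [Function.update_of_ne hj]; exact hq j
    have hcube := hT.2.1 A hA hmem c
    rw [Function.update_self] at hcube
    have hylt : y < -1 := by exact_mod_cast hy2
    have := hcube.1
    rcases min_cases y (q c) with ⟨hmin, _⟩ | ⟨hmin, hle⟩ <;> rw [hmin] at this <;> linarith
  · by_contra hcon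
    push_neg at hcon
    obtain ⟨y, hy1, hy2⟩ := EReal.exists_between_coe_real hcon
    have hmem : A.mem (Function.update q c (max y (q c))) := by
      intro j
      by_cases hj : j = c
      · subst hj
        rw [Function.update_self]
        constructor
        · exact le_trans (hq j).1 (EReal.coe_le_coe_iff.2 (le_max_right _ _))
        · rcases max_cases y (q j) with ⟨hmax, _⟩ | ⟨hmax, _⟩
          · rw [hmax]; exact hy2.le
          · rw [hmax]; exact (hq j).2
      · rw [Function.update_of_ne hj]; exact hq j
    have hcube := hT.2.1 A hA hmem c
    rw [Function.update_self] at hcube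
    have hygt : 1 < y := by exact_mod_cast hy1
    have := hcube.2
    rcases max_cases y (q c) with ⟨hmax, _⟩ | ⟨hmax, hle⟩ <;> rw [hmax] at this <;> linarith

end Stmt6Aux
namespace Stmt6Aux

open Finset

variable {d : ℕ}

lemma local_eps {𝒯 : Finset (Box d)} (hT : IsTiling 𝒯) (q : Fin d → ℝ) :
    ∃ ε : ℝ, 0 < ε ∧ ∀ z : Fin d → ℝ, (∀ c, |z c - q c| ≤ ε) →
      ∀ C ∈ withExt 𝒯, C.mem z → C.mem q := by
  have key : ∀ C : Box d, ∃ ε : ℝ, 0 < ε ∧ ∀ z : Fin d → ℝ, (∀ c, |z c - q c| ≤ ε) →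
      C.mem z → C.mem q := by
    intro C
    by_cases hmem : C.mem q
    · exact ⟨1, one_pos, fun _ _ _ => hmem⟩
    · unfold Box.mem at hmem
      push_neg at hmem
      obtain ⟨c, hc⟩ := hmem
      by_cases hlo : C.lo c ≤ ((q c : ℝ) : EReal)
      · have hhi : C.hi c < ((q c : ℝ) : EReal) := hc hlo
        by_cases hbot : C.hi c = ⊥
        · refine ⟨1, one_pos, fun z hz hzC => absurd ((hzC c).2) ?_⟩
          rw [hbot]
          simp
        · obtain ⟨y, hy⟩ := ereal_is_real hbot (fun h => by rw [h] at hhi; exact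
            (not_lt.2 le_top hhi))
          rw [hy] at hhi
          have hyq : y < q c := by exact_mod_cast hhi
          refine ⟨(q c - y) / 2, by linarith, fun z hz hzC => ?_⟩
          exfalso
          have h1 : (z c : EReal) ≤ (y : EReal) := le_trans (hzC c).2 (le_of_eq hy)
          have h2 : z c ≤ y := by exact_mod_cast h1
          have h3 := abs_le.1 (hz c)
          linarith [h3.1]
      · push_neg at hlo
        by_cases htop : C.lo c = ⊤
        · refine ⟨1, one_pos, fun z hz hzC => absurd ((hzC c).1) ?_⟩
          rw [htop]
          simp
        · obtain ⟨y, hy⟩ := ereal_is_real (fun h => by rw [h] at hlo; exact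
            (not_lt.2 bot_le hlo)) htop
          rw [hy] at hlo
          have hyq : q c < y := by exact_mod_cast hlo
          refine ⟨(y - q c) / 2, by linarith, fun z hz hzC => ?_⟩
          exfalso
          have h1 : (y : EReal) ≤ (z c : EReal) := le_trans (le_of_eq hy.symm) (hzC c).1
          have h2 : y ≤ z c := by exact_mod_cast h1
          have h3 := abs_le.1 (hz c)
          linarith [h3.2]
  choose f hf1 hf2 using key
  refine ⟨min 1 ((insert 1 ((withExt 𝒯).image f)).min' ⟨1, Finset.mem_insert_self _ _⟩), ?_, ?_⟩
  · apply lt_min one_pos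
    apply (Finset.lt_min'_iff _ _).2
    intro y hy
    rcases Finset.mem_insert.1 hy with rfl | hy
    · exact one_pos
    · rcases Finset.mem_image.1 hy with ⟨C, _, rfl⟩
      exact hf1 C
  · intro z hz C hC hzC
    refine hf2 C z (fun c => le_trans (hz c) ?_) hzC
    exact le_trans (min_le_right _ _)
      (Finset.min'_le _ _ (Finset.mem_insert_of_mem (Finset.mem_image_of_mem f hC)))

lemma generic_choice {𝒯 : Finset (Box d)} (l : Fin d) {a b : EReal} (hab : a < b) :
    ∃ x : ℝ, a < (x : EReal) ∧ (x : EReal) < b ∧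
      ∀ C ∈ withExt 𝒯, C.lo l ≠ (x : EReal) ∧ C.hi l ≠ (x : EReal) := by
  obtain ⟨x1, hx1a, hx1b⟩ := EReal.exists_between_coe_real hab
  obtain ⟨x2, hx2, hx2b⟩ := EReal.exists_between_coe_real hx1b
  have hx12 : x1 < x2 := by exact_mod_cast hx2
  have hinf : (Set.Ioo x1 x2).Infinite := Set.infinite_coe_iff.mp (Set.Ioo.infinite hx12)
  set S : Set ℝ := (fun x : ℝ => (x : EReal)) ⁻¹'
    (((withExt 𝒯).image (fun C => C.lo l) ∪ (withExt 𝒯).image (fun C => C.hi l)) : Finset EReal)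
    with hS
  have hSfin : S.Finite := Set.Finite.preimage
    (Set.injOn_of_injective (fun u v h => by exact_mod_cast h))
    (Finset.finite_toSet _)
  obtain ⟨x, hx⟩ := (hinf.diff hSfin).nonempty
  refine ⟨x, ?_, ?_, ?_⟩
  · exact lt_trans hx1a (EReal.coe_lt_coe_iff.2 hx.1.1)
  · exact lt_trans (EReal.coe_lt_coe_iff.2 hx.1.2) hx2b
  · intro C hC
    constructor
    · intro hcon
      exact hx.2 (by
        rw [hS]
        simp only [Set.mem_preimage]
        exact Finset.mem_coe.2 (Finset.mem_union.2 (Or.inl (Finset.mem_image.2 ⟨C, hC, hcon⟩))))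
    · intro hcon
      exact hx.2 (by
        rw [hS]
        simp only [Set.mem_preimage]
        exact Finset.mem_coe.2 (Finset.mem_union.2 (Or.inr (Finset.mem_image.2 ⟨C, hC, hcon⟩))))

end Stmt6Aux
namespace Stmt6Aux

open Finset

variable {d : ℕ}

lemma slide_step {𝒯 : Finset (Box d)} (hT : IsTiling 𝒯) {A : Box d}
    (hAhi : ∀ c, A.hi c ≤ ((1 : ℝ) : EReal))
    {z : Fin d → ℝ} {F : Finset (Box d)} (hF : F ⊆ withExt 𝒯) (hAF : A ∈ F)
    (hmem : ∀ C ∈ F, C.mem z) (l : Fin d)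
    (hgen : ∀ C ∈ withExt 𝒯, C.lo l ≠ ((z l : ℝ) : EReal) ∧ C.hi l ≠ ((z l : ℝ) : EReal)) :
    ∃ (r : ℝ) (E : Box d), E ∉ F ∧ E ∈ withExt 𝒯 ∧
      (∀ C ∈ insert E F, C.mem (Function.update z l r)) := by
  have hne : F.Nonempty := ⟨A, hAF⟩
  obtain ⟨C₀, hC₀F, hC₀⟩ := Finset.exists_mem_eq_inf' (H := hne) (fun C => C.hi l)
  have hlt : ∀ C ∈ F, ((z l : ℝ) : EReal) < C.hi l := fun C hC =>
    lt_of_le_of_ne ((hmem C hC l).2) (Ne.symm (hgen C (hF hC)).2)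
  have hzt : ((z l : ℝ) : EReal) < C₀.hi l := hlt C₀ hC₀F
  have hinfle : ∀ C ∈ F, C₀.hi l ≤ C.hi l := by
    intro C hC
    rw [← hC₀]
    exact Finset.inf'_le _ hC
  have htle : C₀.hi l ≤ ((1 : ℝ) : EReal) := le_trans (hinfle A hAF) (hAhi l)
  obtain ⟨r, hr⟩ := ereal_is_real (a := C₀.hi l)
    (fun h => by rw [h] at hzt; exact (not_lt.2 bot_le) hzt)
    (fun h => by rw [h] at htle; exact (not_le.2 (EReal.coe_lt_top 1)) htle)
  have hzr : z l < r := by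
    rw [hr] at hzt
    exact_mod_cast hzt
  have hrle : ∀ C ∈ F, (r : EReal) ≤ C.hi l := by
    intro C hC
    rw [← hr]
    exact hinfle C hC
  have hz'mem : ∀ C ∈ F, C.mem (Function.update z l r) := by
    intro C hC c
    by_cases hc : c = l
    · subst hc
      rw [Function.update_self]
      exact ⟨le_trans (hmem C hC c).1 (EReal.coe_le_coe_iff.2 hzr.le), hrle C hC⟩
    · rw [Function.update_of_ne hc]
      exact hmem C hC c
  obtain ⟨ε, hε, hloc⟩ := local_eps hT (Function.update z l r)
  classical
  let γ : Fin d → ℝ := fun c => if c = l then 1 else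
    if C₀.lo c = ((z c : ℝ) : EReal) then 1 else
    if C₀.hi c = ((z c : ℝ) : EReal) then -1 else 0
  let v : Fin d → ℝ := fun c => Function.update z l r c + ε * γ c
  have hγabs : ∀ c, |γ c| ≤ 1 := by
    intro c
    simp only [γ]
    split_ifs <;> norm_num
  obtain ⟨E, hE, hEv⟩ := cover hT v
  have hvz' : ∀ c, |v c - Function.update z l r c| ≤ ε := by
    intro c
    have : v c - Function.update z l r c = ε * γ c := by simp [v]
    rw [this, abs_mul, abs_of_pos hε]
    nlinarith [hγabs c, abs_nonneg (γ c), hε]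
  have hEz' : E.mem (Function.update z l r) := hloc v hvz' E hE hEv
  have hvl : v l = r + ε := by simp [v, γ, Function.update_self]
  have hvcl : ∀ c, c ≠ l → v c = z c + ε * γ c := by
    intro c hc
    simp [v, Function.update_of_ne hc]
  have hC₀full : C₀.FullDim := fullDim_of_mem_withExt hT (hF hC₀F)
  have hEF : E ∉ F := by
    intro hEF'
    have hEfull : E.FullDim := fullDim_of_mem_withExt hT (hF hEF')
    have hEC : E = C₀ := by
      apply eq_of_all_nondeg hT (hF hEF') (hF hC₀F)
      intro c
      by_cases hcl : c = l
      · subst hcl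
        have hElo : E.lo c < ((z c : ℝ) : EReal) :=
          lt_of_le_of_ne (hmem E hEF' c).1 (hgen E (hF hEF')).1
        have hC₀lo : C₀.lo c < ((z c : ℝ) : EReal) :=
          lt_of_le_of_ne (hmem C₀ hC₀F c).1 (hgen C₀ (hF hC₀F)).1
        exact lt_of_lt_of_le (max_lt hElo hC₀lo) (le_min (hlt E hEF' ).le hzt.le)
      · by_cases hlo : C₀.lo c = ((z c : ℝ) : EReal)
        · have hγc : γ c = 1 := by simp [γ, hcl, hlo]
          have hvc : v c = z c + ε := by rw [hvcl c hcl, hγc]; ring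
          have hEhi : ((z c + ε : ℝ) : EReal) ≤ E.hi c := by
            have := (hEv c).2
            rwa [hvc] at this
          have hmax : max (E.lo c) (C₀.lo c) ≤ ((z c : ℝ) : EReal) := by
            apply max_le _ (le_of_eq hlo)
            have := (hEz' c).1
            rwa [Function.update_of_ne hcl] at this
          have hmin : ((z c : ℝ) : EReal) < min (E.hi c) (C₀.hi c) := by
            apply lt_min
            · exact lt_of_lt_of_le (EReal.coe_lt_coe_iff.2 (by linarith)) hEhi
            · rw [← hlo]; exact hC₀full c
          exact lt_of_le_of_lt hmax hmin
        · by_cases hhi : C₀.hi c = ((z c : ℝ) : EReal)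
          · have hγc : γ c = -1 := by simp [γ, hcl, hlo, hhi]
            have hvc : v c = z c - ε := by rw [hvcl c hcl, hγc]; ring
            have hElo : E.lo c ≤ ((z c - ε : ℝ) : EReal) := by
              have := (hEv c).1
              rwa [hvc] at this
            have hmax : max (E.lo c) (C₀.lo c) < ((z c : ℝ) : EReal) := by
              apply max_lt
              · exact lt_of_le_of_lt hElo (EReal.coe_lt_coe_iff.2 (by linarith))
              · rw [← hhi]; exact hC₀full c
            have hmin : ((z c : ℝ) : EReal) ≤ min (E.hi c) (C₀.hi c) := by
              apply le_min _ (le_of_eq hhi.symm)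
              have := (hEz' c).2
              rwa [Function.update_of_ne hcl] at this
            exact lt_of_lt_of_le hmax hmin
          · have hC₀lo : C₀.lo c < ((z c : ℝ) : EReal) :=
              lt_of_le_of_ne (hmem C₀ hC₀F c).1 hlo
            have hC₀hi : ((z c : ℝ) : EReal) < C₀.hi c :=
              lt_of_le_of_ne (hmem C₀ hC₀F c).2 (fun h => hhi h.symm)
            by_cases hEhi : E.hi c = ((z c : ℝ) : EReal)
            · have hElo : E.lo c < ((z c : ℝ) : EReal) := by
                rw [← hEhi]; exact hEfull c
              exact lt_of_lt_of_le (max_lt hElo hC₀lo)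
                (le_min (le_of_eq hEhi.symm) hC₀hi.le)
            · have hEhi' : ((z c : ℝ) : EReal) < E.hi c :=
                lt_of_le_of_ne (hmem E hEF' c).2 (fun h => hEhi h.symm)
              exact lt_of_le_of_lt (max_le (hmem E hEF' c).1 hC₀lo.le)
                (lt_min hEhi' hC₀hi)
    have h1 : ((r + ε : ℝ) : EReal) ≤ E.hi l := by
      have := (hEv l).2
      rwa [hvl] at this
    rw [hEC, hr] at h1
    have : r + ε ≤ r := by exact_mod_cast h1
    linarith
  refine ⟨r, E, hEF, hE, ?_⟩
  intro C hC
  rcases Finset.mem_insert.1 hC with rfl | hC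
  · exact hEz'
  · exact hz'mem C hC

end Stmt6Aux
namespace Stmt6Aux

open Finset

variable {d : ℕ}

lemma slide {𝒯 : Finset (Box d)} (hT : IsTiling 𝒯) {A : Box d}
    (hAhi : ∀ c, A.hi c ≤ ((1 : ℝ) : EReal)) (s : Finset (Fin d)) :
    ∀ (z : Fin d → ℝ) (F : Finset (Box d)), F ⊆ withExt 𝒯 → A ∈ F → (∀ C ∈ F, C.mem z) →
    (∀ l ∈ s, ∀ C ∈ withExt 𝒯, C.lo l ≠ ((z l : ℝ) : EReal) ∧ C.hi l ≠ ((z l : ℝ) : EReal)) →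
    ∃ (z' : Fin d → ℝ) (F' : Finset (Box d)), F' ⊆ withExt 𝒯 ∧ (∀ C ∈ F', C.mem z') ∧
      F.card + s.card ≤ F'.card := by
  classical
  induction s using Finset.induction_on with
  | empty =>
    intro z F hF hAF hmem _
    exact ⟨z, F, hF, hmem, by simp⟩
  | @insert l s hl ih =>
    intro z F hF hAF hmem hgen
    obtain ⟨r, E, hEF, hE, hmem'⟩ := slide_step hT hAhi hF hAF hmem l
      (hgen l (Finset.mem_insert_self _ _))
    have hsub : insert E F ⊆ withExt 𝒯 := by
      intro C hC
      rcases Finset.mem_insert.1 hC with rfl | hC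
      · exact hE
      · exact hF hC
    have hgen' : ∀ l' ∈ s, ∀ C ∈ withExt 𝒯,
        C.lo l' ≠ ((Function.update z l r l' : ℝ) : EReal) ∧
        C.hi l' ≠ ((Function.update z l r l' : ℝ) : EReal) := by
      intro l' hl' C hC
      have hne : l' ≠ l := fun h => hl (h ▸ hl')
      rw [Function.update_of_ne hne]
      exact hgen l' (Finset.mem_insert_of_mem hl') C hC
    obtain ⟨z', F', hF', hmem'', hcard⟩ := ih (Function.update z l r) (insert E F) hsub
      (Finset.mem_insert_of_mem hAF) hmem' hgen'
    refine ⟨z', F', hF', hmem'', ?_⟩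
    rw [Finset.card_insert_of_notMem hl]
    rw [Finset.card_insert_of_notMem hEF] at hcard
    omega

end Stmt6Aux
namespace Stmt6Aux

open Finset

variable {d : ℕ}

lemma forward_tiles {𝒯 : Finset (Box d)} (hT : IsTiling 𝒯) (hP : Proper 𝒯)
    {A B : Box d} (hA : A ∈ 𝒯) (hB : B ∈ 𝒯) (hne : A ≠ B) (hint : Intersects A B)
    (hcard : interDim A B + 2 ≤ d) : False := by
  classical
  obtain ⟨q, hqA, hqB⟩ := hint
  have hAwe : A ∈ withExt 𝒯 := Finset.mem_union_left _ hA
  have hBwe : B ∈ withExt 𝒯 := Finset.mem_union_left _ hB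
  set Deg : Fin d → Prop := fun c => max (A.lo c) (B.lo c) = min (A.hi c) (B.hi c) with hDegdef
  have hmaxle : ∀ c, max (A.lo c) (B.lo c) ≤ ((q c : ℝ) : EReal) :=
    fun c => max_le (hqA c).1 (hqB c).1
  have hlemin : ∀ c, ((q c : ℝ) : EReal) ≤ min (A.hi c) (B.hi c) :=
    fun c => le_min (hqA c).2 (hqB c).2
  have hchoice : ∀ c, ∃ x : ℝ,
      (max (A.lo c) (B.lo c) ≤ (x : EReal) ∧ (x : EReal) ≤ min (A.hi c) (B.hi c)) ∧
      (¬ Deg c → ∀ C ∈ withExt 𝒯, C.lo c ≠ (x : EReal) ∧ C.hi c ≠ (x : EReal)) := by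
    intro c
    by_cases hc : Deg c
    · exact ⟨q c, ⟨hmaxle c, hlemin c⟩, fun h => absurd hc h⟩
    · have hlt : max (A.lo c) (B.lo c) < min (A.hi c) (B.hi c) :=
        lt_of_le_of_ne (le_trans (hmaxle c) (hlemin c)) hc
      obtain ⟨x, h1, h2, h3⟩ := generic_choice (𝒯 := 𝒯) c hlt
      exact ⟨x, ⟨h1.le, h2.le⟩, fun _ => h3⟩
  choose p hp1 hp2 using hchoice
  have hpA : A.mem p := fun c =>
    ⟨le_trans (le_max_left _ _) (hp1 c).1, le_trans (hp1 c).2 (min_le_left _ _)⟩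
  have hpB : B.mem p := fun c =>
    ⟨le_trans (le_max_right _ _) (hp1 c).1, le_trans (hp1 c).2 (min_le_right _ _)⟩
  have hdegval : ∀ c, Deg c → max (A.lo c) (B.lo c) = ((p c : ℝ) : EReal) ∧
      min (A.hi c) (B.hi c) = ((p c : ℝ) : EReal) := by
    intro c hc
    have h1 := (hp1 c).1
    have h2 := (hp1 c).2
    constructor
    · exact le_antisymm h1 (le_of_le_of_eq h2 hc.symm)
    · refine le_antisymm ?_ h2
      rw [← hc]
      exact h1
  have hcase : ∀ c, Deg c →
      (A.hi c = ((p c : ℝ) : EReal) ∧ B.lo c = ((p c : ℝ) : EReal)) ∨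
      (A.lo c = ((p c : ℝ) : EReal) ∧ B.hi c = ((p c : ℝ) : EReal)) := by
    intro c hc
    obtain ⟨hmax, hmin⟩ := hdegval c hc
    have hAfull := hT.1 A hA c
    have hBfull := hT.1 B hB c
    rcases max_cases (A.lo c) (B.lo c) with ⟨hm, _⟩ | ⟨hm, _⟩ <;>
      rcases min_cases (A.hi c) (B.hi c) with ⟨hn, _⟩ | ⟨hn, _⟩
    · exfalso
      rw [hm] at hmax
      rw [hn] at hmin
      rw [hmax, hmin] at hAfull
      exact lt_irrefl _ hAfull
    · right
      rw [hm] at hmax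
      rw [hn] at hmin
      exact ⟨hmax, hmin⟩
    · left
      rw [hm] at hmax
      rw [hn] at hmin
      exact ⟨hmin, hmax⟩
    · exfalso
      rw [hm] at hmax
      rw [hn] at hmin
      rw [hmax, hmin] at hBfull
      exact lt_irrefl _ hBfull
  -- the sign of A at each degenerate coordinate
  set sgn : Fin d → ℝ := fun c => if A.hi c = ((p c : ℝ) : EReal) then 1 else -1 with hsgndef
  have hsgn : ∀ c, Deg c →
      (sgn c = 1 ∧ A.hi c = ((p c : ℝ) : EReal) ∧ B.lo c = ((p c : ℝ) : EReal) ∧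
        A.lo c < ((p c : ℝ) : EReal) ∧ ((p c : ℝ) : EReal) < B.hi c) ∨
      (sgn c = -1 ∧ A.lo c = ((p c : ℝ) : EReal) ∧ B.hi c = ((p c : ℝ) : EReal) ∧
        B.lo c < ((p c : ℝ) : EReal) ∧ ((p c : ℝ) : EReal) < A.hi c) := by
    intro c hc
    rcases hcase c hc with ⟨h1, h2⟩ | ⟨h1, h2⟩
    · left
      refine ⟨by simp [hsgndef, h1], h1, h2, ?_, ?_⟩
      · rw [← h1]; exact hT.1 A hA c
      · rw [← h2]; exact hT.1 B hB c
    · right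
      have hAhine : A.hi c ≠ ((p c : ℝ) : EReal) := by
        intro hcon
        have := hT.1 A hA c
        rw [h1, hcon] at this
        exact lt_irrefl _ this
      refine ⟨by simp [hsgndef, hAhine], h1, h2, ?_, ?_⟩
      · rw [← h2]; exact hT.1 B hB c
      · rw [← h1]; exact hT.1 A hA c
  set D : Finset (Fin d) := univ.filter (fun c => Deg c) with hDdef
  have hmemD : ∀ c, c ∈ D ↔ Deg c := by
    intro c
    rw [hDdef]
    simp
  -- cardinality of D
  have hDcard : interDim A B + D.card = d := by
    have hsplit := Finset.card_filter_add_card_filter_not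
      (s := (univ : Finset (Fin d)))
      (p := fun c => max (A.lo c) (B.lo c) < min (A.hi c) (B.hi c))
    have hDalt : D = univ.filter
        (fun c => ¬ (max (A.lo c) (B.lo c) < min (A.hi c) (B.hi c))) := by
      apply Finset.filter_congr
      intro c _
      constructor
      · intro hc
        have hc' : max (A.lo c) (B.lo c) = min (A.hi c) (B.hi c) := hc
        rw [hc']
        exact lt_irrefl _
      · intro hc
        exact le_antisymm (le_trans (hmaxle c) (hlemin c)) (not_lt.1 hc)
    rw [hDalt]
    have huniv : (univ : Finset (Fin d)).card = d := by simp
    have hid : interDim A B = (univ.filter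
        (fun c => max (A.lo c) (B.lo c) < min (A.hi c) (B.hi c))).card := by unfold interDim; convert rfl
    omega
  have hD2 : 2 ≤ D.card := by omega
  obtain ⟨ε, hε, hloc⟩ := local_eps hT p
  set v : Fin d → (Fin d → ℝ) := fun k c =>
    p c + ε * (if c ∈ D then (if c = k then 1 else -1) * sgn c else 0) with hvdef
  have hCBex : ∀ k, ∃ C, C ∈ withExt 𝒯 ∧ C.mem (v k) := by
    intro k
    obtain ⟨C, hC1, hC2⟩ := cover hT (v k)
    exact ⟨C, hC1, hC2⟩
  choose CB hCBw hCBv using hCBex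
  have hsgnabs : ∀ c, |sgn c| = 1 := by
    intro c
    rw [hsgndef]
    simp only
    split_ifs <;> norm_num
  have hCBp : ∀ k, (CB k).mem p := by
    intro k
    refine hloc (v k) ?_ _ (hCBw k) (hCBv k)
    intro c
    have : v k c - p c = ε * (if c ∈ D then (if c = k then 1 else -1) * sgn c else 0) := by
      rw [hvdef]
      ring
    rw [this, abs_mul, abs_of_pos hε]
    by_cases h1 : c ∈ D
    · rw [if_pos h1, abs_mul, hsgnabs c, mul_one]
      by_cases h2 : c = k
      · rw [if_pos h2]; norm_num
      · rw [if_neg h2]; norm_num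
    · rw [if_neg h1]
      norm_num [hε.le]
  have hvk_k : ∀ k ∈ D, v k k = p k + ε * sgn k := by
    intro k hk
    rw [hvdef]
    simp [hk]
  have hvk_c : ∀ k, ∀ c ∈ D, c ≠ k → v k c = p c - ε * sgn c := by
    intro k c hc hck
    rw [hvdef]
    simp only [if_pos hc, if_neg hck]
    ring
  have hvk_out : ∀ k c, c ∉ D → v k c = p c := by
    intro k c hc
    rw [hvdef]
    simp [hc]
  have hCBneA : ∀ k ∈ D, CB k ≠ A := by
    intro k hk hcon
    rcases hsgn k ((hmemD k).1 hk) with ⟨hs, hAhi, _, _, _⟩ | ⟨hs, hAlo, _, _, _⟩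
    · have h1 := (hCBv k k).2
      rw [hcon, hvk_k k hk, hs, hAhi] at h1
      have : p k + ε * 1 ≤ p k := by exact_mod_cast h1
      linarith
    · have h1 := (hCBv k k).1
      rw [hcon, hvk_k k hk, hs, hAlo] at h1
      have : p k ≤ p k + ε * (-1) := by exact_mod_cast h1
      linarith
  have hCBneB : ∀ k ∈ D, CB k ≠ B := by
    intro k hk hcon
    obtain ⟨k', hk'D, hk'k⟩ := Finset.exists_mem_ne (s := D) (by omega) k
    rcases hsgn k' ((hmemD k').1 hk'D) with ⟨hs, _, hBlo, _, _⟩ | ⟨hs, _, hBhi, _, _⟩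
    · have h1 := (hCBv k k').1
      rw [hcon, hvk_c k k' hk'D hk'k, hs, hBlo] at h1
      have : p k' ≤ p k' - ε * 1 := by exact_mod_cast h1
      linarith
    · have h1 := (hCBv k k').2
      rw [hcon, hvk_c k k' hk'D hk'k, hs, hBhi] at h1
      have : p k' - ε * (-1) ≤ p k' := by exact_mod_cast h1
      linarith
  have hinj : ∀ k ∈ D, ∀ k' ∈ D, k ≠ k' → CB k = CB k' → False := by
    intro k hk k' hk' hkk' hCC
    have hndA : ∀ c, max (A.lo c) ((CB k).lo c) < min (A.hi c) ((CB k).hi c) := by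
      intro c
      by_cases hcD : c ∈ D
      · have hlovk : (CB k).lo c ≤ ((v k c : ℝ) : EReal) := (hCBv k c).1
        have hhivk : ((v k c : ℝ) : EReal) ≤ (CB k).hi c := (hCBv k c).2
        have hlovk' : (CB k).lo c ≤ ((v k' c : ℝ) : EReal) := by
          rw [hCC]; exact (hCBv k' c).1
        have hhivk' : ((v k' c : ℝ) : EReal) ≤ (CB k).hi c := by
          rw [hCC]; exact (hCBv k' c).2
        rcases hsgn c ((hmemD c).1 hcD) with ⟨hs, hAhic, _, hAloc, _⟩ |
          ⟨hs, hAloc, _, _, hAhic⟩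
        · have hlo_lt : (CB k).lo c < ((p c : ℝ) : EReal) := by
            by_cases hck : c = k
            · have hv : v k' c = p c - ε * sgn c :=
                hvk_c k' c hcD (by rw [hck]; exact hkk')
              rw [hv, hs] at hlovk'
              exact lt_of_le_of_lt hlovk' (EReal.coe_lt_coe_iff.2 (by linarith))
            · have hv : v k c = p c - ε * sgn c := hvk_c k c hcD hck
              rw [hv, hs] at hlovk
              exact lt_of_le_of_lt hlovk (EReal.coe_lt_coe_iff.2 (by linarith))
          exact lt_of_lt_of_le (max_lt hAloc hlo_lt)
            (le_min (le_of_eq hAhic.symm) (hCBp k c).2)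
        · have hhi_gt : ((p c : ℝ) : EReal) < (CB k).hi c := by
            by_cases hck : c = k
            · have hv : v k' c = p c - ε * sgn c :=
                hvk_c k' c hcD (by rw [hck]; exact hkk')
              rw [hv, hs] at hhivk'
              exact lt_of_lt_of_le (EReal.coe_lt_coe_iff.2 (by linarith)) hhivk'
            · have hv : v k c = p c - ε * sgn c := hvk_c k c hcD hck
              rw [hv, hs] at hhivk
              exact lt_of_lt_of_le (EReal.coe_lt_coe_iff.2 (by linarith)) hhivk
          exact lt_of_le_of_lt (max_le (le_of_eq hAloc) (hCBp k c).1)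
            (lt_min hAhic hhi_gt)
      · have h1 := hp2 c (fun h => hcD ((hmemD c).2 h))
        have hCBlo := lt_of_le_of_ne (hCBp k c).1 (h1 (CB k) (hCBw k)).1
        have hAlo' := lt_of_le_of_ne (hpA c).1 (h1 A hAwe).1
        have hCBhi := lt_of_le_of_ne (hCBp k c).2
          (fun hh => (h1 (CB k) (hCBw k)).2 hh.symm)
        have hAhi' := lt_of_le_of_ne (hpA c).2 (fun hh => (h1 A hAwe).2 hh.symm)
        exact lt_of_lt_of_le (max_lt hAlo' hCBlo) (le_min hAhi'.le hCBhi.le)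
    have hAC : A = CB k := eq_of_all_nondeg hT hAwe (hCBw k) hndA
    exact hCBneA k hk hAC.symm
  set F₀ : Finset (Box d) := insert A (insert B (D.image CB)) with hF₀def
  have hBnotim : B ∉ D.image CB := by
    intro hmem
    obtain ⟨k, hk, hkB⟩ := Finset.mem_image.1 hmem
    exact hCBneB k hk hkB
  have hAnot : A ∉ insert B (D.image CB) := by
    intro hmem
    rcases Finset.mem_insert.1 hmem with h | h
    · exact hne h
    · obtain ⟨k, hk, hkA⟩ := Finset.mem_image.1 h
      exact hCBneA k hk hkA
  have himcard : (D.image CB).card = D.card := by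
    apply Finset.card_image_of_injOn
    intro k hk k' hk' h
    by_contra hkk'
    exact hinj k (Finset.mem_coe.1 hk) k' (Finset.mem_coe.1 hk') hkk' h
  have hF₀card : F₀.card = 2 + D.card := by
    rw [hF₀def, Finset.card_insert_of_notMem hAnot,
      Finset.card_insert_of_notMem hBnotim, himcard]
    omega
  have hF₀sub : F₀ ⊆ withExt 𝒯 := by
    intro C hC
    rcases Finset.mem_insert.1 hC with rfl | hC
    · exact hAwe
    rcases Finset.mem_insert.1 hC with rfl | hC
    · exact hBwe
    obtain ⟨k, hk, rfl⟩ := Finset.mem_image.1 hC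
    exact hCBw k
  have hF₀mem : ∀ C ∈ F₀, C.mem p := by
    intro C hC
    rcases Finset.mem_insert.1 hC with rfl | hC
    · exact hpA
    rcases Finset.mem_insert.1 hC with rfl | hC
    · exact hpB
    obtain ⟨k, hk, rfl⟩ := Finset.mem_image.1 hC
    exact hCBp k
  have hAF₀ : A ∈ F₀ := Finset.mem_insert_self _ _
  have hAhi1 : ∀ c, A.hi c ≤ ((1 : ℝ) : EReal) := fun c => (tile_bounds hT hA hpA c).2
  set sfree : Finset (Fin d) := univ.filter (fun c => ¬ Deg c) with hsdef
  have hsgen : ∀ l ∈ sfree, ∀ C ∈ withExt 𝒯,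
      C.lo l ≠ ((p l : ℝ) : EReal) ∧ C.hi l ≠ ((p l : ℝ) : EReal) := by
    intro l hl
    exact hp2 l (Finset.mem_filter.1 hl).2
  obtain ⟨z', F', hF'sub, hF'mem, hF'card⟩ :=
    slide hT hAhi1 sfree p F₀ hF₀sub hAF₀ hF₀mem hsgen
  have hscard : D.card + sfree.card = d := by
    have hsplit := Finset.card_filter_add_card_filter_not
      (s := (univ : Finset (Fin d))) (p := fun c => Deg c)
    have huniv : (univ : Finset (Fin d)).card = d := by simp
    rw [hDdef, hsdef]
    omega
  have hsubfilter : F' ⊆ (withExt 𝒯).filter (fun C => C.mem z') :=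
    fun C hC => Finset.mem_filter.2 ⟨hF'sub hC, hF'mem C hC⟩
  have hle := Finset.card_le_card hsubfilter
  have hprop := hP z'
  omega

end Stmt6Aux
namespace Stmt6Aux

open Finset

variable {d : ℕ}

lemma extBox_lo_of_lt {i j : Fin d} (h : j < i) (s : Bool) :
    (extBox d i s).lo j = ((-1 : ℝ) : EReal) := by
  unfold extBox; dsimp only; rw [if_pos h]

lemma extBox_hi_of_lt {i j : Fin d} (h : j < i) (s : Bool) :
    (extBox d i s).hi j = ((1 : ℝ) : EReal) := by
  unfold extBox; dsimp only; rw [if_pos h]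

lemma extBox_lo_self_true {i : Fin d} : (extBox d i true).lo i = ((1 : ℝ) : EReal) := by
  unfold extBox; dsimp only; rw [if_neg (lt_irrefl i), if_pos rfl, if_pos rfl]

lemma extBox_lo_self_false {i : Fin d} : (extBox d i false).lo i = ⊥ := by
  unfold extBox; dsimp only; rw [if_neg (lt_irrefl i), if_pos rfl, if_neg Bool.false_ne_true]

lemma extBox_hi_self_true {i : Fin d} : (extBox d i true).hi i = ⊤ := by
  unfold extBox; dsimp only; rw [if_neg (lt_irrefl i), if_pos rfl, if_pos rfl]

lemma extBox_hi_self_false {i : Fin d} : (extBox d i false).hi i = ((-1 : ℝ) : EReal) := by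
  unfold extBox; dsimp only; rw [if_neg (lt_irrefl i), if_pos rfl, if_neg Bool.false_ne_true]

lemma extBox_lo_of_gt {i j : Fin d} (h : i < j) (s : Bool) : (extBox d i s).lo j = ⊥ := by
  unfold extBox; dsimp only; rw [if_neg (by exact fun hc => absurd (lt_trans h hc) (lt_irrefl _)), if_neg (ne_of_gt h)]

lemma extBox_hi_of_gt {i j : Fin d} (h : i < j) (s : Bool) : (extBox d i s).hi j = ⊤ := by
  unfold extBox; dsimp only; rw [if_neg (by exact fun hc => absurd (lt_trans h hc) (lt_irrefl _)), if_neg (ne_of_gt h)]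

lemma interDim_comm (A B : Box d) : interDim A B = interDim B A := by
  unfold interDim
  congr 1
  apply Finset.filter_congr
  intro c _
  rw [max_comm (B.lo c) (A.lo c), min_comm (B.hi c) (A.hi c)]

lemma intersects_comm {A B : Box d} (h : Intersects A B) : Intersects B A := by
  obtain ⟨q, h1, h2⟩ := h
  exact ⟨q, h2, h1⟩

lemma card_filter_ne (i : Fin d) : (univ.filter (fun c : Fin d => c ≠ i)).card = d - 1 := by
  rw [Finset.filter_ne', Finset.card_erase_of_mem (Finset.mem_univ _), Finset.card_univ,
    Fintype.card_fin]

lemma interDim_eq_of_iff {A B : Box d} (i : Fin d)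
    (h : ∀ c, (max (A.lo c) (B.lo c) < min (A.hi c) (B.hi c)) ↔ c ≠ i) :
    interDim A B = d - 1 := by
  unfold interDim
  rw [Finset.filter_congr (fun c _ => h c), card_filter_ne]

lemma interDim_tile_ext {𝒯 : Finset (Box d)} (hT : IsTiling 𝒯) {A : Box d} (hA : A ∈ 𝒯)
    (i : Fin d) (s : Bool) (hint : Intersects A (extBox d i s)) :
    interDim A (extBox d i s) = d - 1 := by
  obtain ⟨q, hqA, hqE⟩ := hint
  have hb := tile_bounds hT hA hqA
  have hfull := hT.1 A hA
  apply interDim_eq_of_iff i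
  intro c
  rcases lt_trichotomy c i with hc | hc | hc
  · rw [extBox_lo_of_lt hc, extBox_hi_of_lt hc, max_eq_left (hb c).1, min_eq_left (hb c).2]
    exact ⟨fun _ => ne_of_lt hc, fun _ => hfull c⟩
  · subst hc
    cases s
    · have hA1 : A.lo c = ((-1 : ℝ) : EReal) := by
        refine le_antisymm (le_trans (hqA c).1 ?_) (hb c).1
        have := (hqE c).2
        rwa [extBox_hi_self_false] at this
      rw [extBox_lo_self_false, extBox_hi_self_false, max_eq_left bot_le, hA1,
        min_eq_right (le_of_lt (by rw [← hA1]; exact hfull c))]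
      simp
    · have hA1 : A.hi c = ((1 : ℝ) : EReal) := by
        refine le_antisymm (hb c).2 (le_trans ?_ (hqA c).2)
        have := (hqE c).1
        rwa [extBox_lo_self_true] at this
      rw [extBox_lo_self_true, extBox_hi_self_true, min_eq_left le_top, hA1,
        max_eq_right (le_of_lt (by rw [← hA1]; exact hfull c))]
      simp
  · rw [extBox_lo_of_gt hc, extBox_hi_of_gt hc, max_eq_left bot_le, min_eq_left le_top]
    exact ⟨fun _ => (ne_of_gt hc), fun _ => hfull c⟩

lemma interDim_ext_ext_lt {i i' : Fin d} (hii : i < i') (s s' : Bool) :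
    interDim (extBox d i s) (extBox d i' s') = d - 1 := by
  apply interDim_eq_of_iff i
  intro c
  rcases lt_trichotomy c i with hc | hc | hc
  · have hc' : c < i' := lt_trans hc hii
    rw [extBox_lo_of_lt hc, extBox_hi_of_lt hc, extBox_lo_of_lt hc', extBox_hi_of_lt hc',
      max_self, min_self]
    refine ⟨fun _ => ne_of_lt hc, fun _ => EReal.coe_lt_coe_iff.2 (by norm_num)⟩
  · subst hc
    cases s
    · rw [extBox_lo_self_false, extBox_hi_self_false, extBox_lo_of_lt hii, extBox_hi_of_lt hii,
        max_eq_right bot_le, min_eq_left (EReal.coe_le_coe_iff.2 (by norm_num))]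
      simp
    · rw [extBox_lo_self_true, extBox_hi_self_true, extBox_lo_of_lt hii, extBox_hi_of_lt hii,
        max_eq_left (EReal.coe_le_coe_iff.2 (by norm_num)), min_eq_right le_top]
      simp
  · rw [extBox_lo_of_gt hc, extBox_hi_of_gt hc, max_eq_right bot_le, min_eq_right le_top]
    exact ⟨fun _ => ne_of_gt hc, fun _ => extBox_fullDim d i' s' c⟩

lemma not_intersects_same_ext {i : Fin d} {s s' : Bool} (h : s ≠ s') :
    ¬ Intersects (extBox d i s) (extBox d i s') := by
  rintro ⟨q, hq1, hq2⟩
  cases s <;> cases s'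
  · exact h rfl
  · have h1 := (hq2 i).1
    rw [extBox_lo_self_true] at h1
    have h2 := (hq1 i).2
    rw [extBox_hi_self_false] at h2
    have h1' : (1 : ℝ) ≤ q i := by exact_mod_cast h1
    have h2' : q i ≤ (-1 : ℝ) := by exact_mod_cast h2
    linarith
  · have h1 := (hq1 i).1
    rw [extBox_lo_self_true] at h1
    have h2 := (hq2 i).2
    rw [extBox_hi_self_false] at h2
    have h1' : (1 : ℝ) ≤ q i := by exact_mod_cast h1
    have h2' : q i ≤ (-1 : ℝ) := by exact_mod_cast h2
    linarith
  · exact h rfl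

lemma forward_dir {𝒯 : Finset (Box d)} (hT : IsTiling 𝒯) (hP : Proper 𝒯) :
    ∀ A ∈ withExt 𝒯, ∀ B ∈ withExt 𝒯, A ≠ B → Intersects A B → interDim A B = d - 1 := by
  intro A hA B hB hne hint
  have hub : ∃ c, ¬ (max (A.lo c) (B.lo c) < min (A.hi c) (B.hi c)) := by
    by_contra h
    push_neg at h
    exact hne (eq_of_all_nondeg hT hA hB h)
  obtain ⟨c₀, hc₀⟩ := hub
  have hdpos : 0 < d := c₀.pos
  have hle : interDim A B ≤ d - 1 := by
    have hsub : (univ.filter fun c => max (A.lo c) (B.lo c) < min (A.hi c) (B.hi c)) ⊆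
        univ.erase c₀ := by
      intro c hc
      rcases Finset.mem_filter.1 hc with ⟨_, hc2⟩
      exact Finset.mem_erase.2 ⟨fun h => hc₀ (h ▸ hc2), Finset.mem_univ c⟩
    have hcle := Finset.card_le_card hsub
    have huniv : (univ.erase c₀).card = d - 1 := by
      rw [Finset.card_erase_of_mem (Finset.mem_univ _), Finset.card_univ, Fintype.card_fin]
    have hid : interDim A B = (univ.filter fun c =>
        max (A.lo c) (B.lo c) < min (A.hi c) (B.hi c)).card := rfl
    omega
  rcases Finset.mem_union.1 hA with hA' | hA' <;> rcases Finset.mem_union.1 hB with hB' | hB'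
  · by_contra hcon
    exact forward_tiles hT hP hA' hB' hne hint (by omega)
  · obtain ⟨⟨i, s⟩, _, rfl⟩ := Finset.mem_image.1 hB'
    exact interDim_tile_ext hT hA' i s hint
  · obtain ⟨⟨i, s⟩, _, rfl⟩ := Finset.mem_image.1 hA'
    rw [interDim_comm]
    exact interDim_tile_ext hT hB' i s (intersects_comm hint)
  · obtain ⟨⟨i, s⟩, _, rfl⟩ := Finset.mem_image.1 hA'
    obtain ⟨⟨i', s'⟩, _, rfl⟩ := Finset.mem_image.1 hB'
    rcases lt_trichotomy i i' with hii | hii | hii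
    · exact interDim_ext_ext_lt hii s s'
    · subst hii
      have hss : s ≠ s' := fun h => hne (by rw [h])
      exact absurd hint (not_intersects_same_ext hss)
    · rw [interDim_comm]
      exact interDim_ext_ext_lt hii s' s

end Stmt6Aux
namespace Stmt6Aux

open Finset

variable {d : ℕ}

/-- the two boxes touch at `p` in coordinate `k`, with `C` below or above. -/
def dgP (p : Fin d → ℝ) (C C' : Box d) (k : Fin d) : Prop :=
  (C.lo k = ((p k : ℝ) : EReal) ∧ C'.hi k = ((p k : ℝ) : EReal)) ∨
  (C.hi k = ((p k : ℝ) : EReal) ∧ C'.lo k = ((p k : ℝ) : EReal))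

lemma dgP_card_one {𝒯 : Finset (Box d)} (hT : IsTiling 𝒯) (hd : 0 < d)
    (h : ∀ A ∈ withExt 𝒯, ∀ B ∈ withExt 𝒯, A ≠ B → Intersects A B →
      interDim A B = d - 1) (p : Fin d → ℝ) {C C' : Box d}
    (hCw : C ∈ withExt 𝒯) (hC'w : C' ∈ withExt 𝒯) (hCp : C.mem p) (hC'p : C'.mem p)
    (hne : C ≠ C') : (univ.filter (dgP p C C')).card = 1 := by
  have hfulC := fullDim_of_mem_withExt hT hCw
  have hfulC' := fullDim_of_mem_withExt hT hC'w
  have hint : Intersects C C' := ⟨p, hCp, hC'p⟩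
  have hid := h C hCw C' hC'w hne hint
  have hiff : ∀ k, dgP p C C' k ↔
      ¬ (max (C.lo k) (C'.lo k) < min (C.hi k) (C'.hi k)) := by
    intro k
    constructor
    · rintro (⟨h1, h2⟩ | ⟨h1, h2⟩) <;> intro hlt
      · have hle1 : ((p k : ℝ) : EReal) ≤ max (C.lo k) (C'.lo k) := by
          rw [← h1]; exact le_max_left _ _
        have hle2 : min (C.hi k) (C'.hi k) ≤ ((p k : ℝ) : EReal) := by
          rw [← h2]; exact min_le_right _ _
        exact absurd (lt_of_le_of_lt hle1 (lt_of_lt_of_le hlt hle2)) (lt_irrefl _)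
      · have hle1 : ((p k : ℝ) : EReal) ≤ max (C.lo k) (C'.lo k) := by
          rw [← h2]; exact le_max_right _ _
        have hle2 : min (C.hi k) (C'.hi k) ≤ ((p k : ℝ) : EReal) := by
          rw [← h1]; exact min_le_left _ _
        exact absurd (lt_of_le_of_lt hle1 (lt_of_lt_of_le hlt hle2)) (lt_irrefl _)
    · intro hnlt
      have hmaxle : max (C.lo k) (C'.lo k) ≤ ((p k : ℝ) : EReal) :=
        max_le (hCp k).1 (hC'p k).1
      have hlemin : ((p k : ℝ) : EReal) ≤ min (C.hi k) (C'.hi k) :=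
        le_min (hCp k).2 (hC'p k).2
      have heq : max (C.lo k) (C'.lo k) = min (C.hi k) (C'.hi k) :=
        le_antisymm (le_trans hmaxle hlemin) (not_lt.1 hnlt)
      have hmaxp : max (C.lo k) (C'.lo k) = ((p k : ℝ) : EReal) :=
        le_antisymm hmaxle (by rw [heq]; exact hlemin)
      have hminp : min (C.hi k) (C'.hi k) = ((p k : ℝ) : EReal) := by
        rw [← heq]; exact hmaxp
      rcases max_cases (C.lo k) (C'.lo k) with ⟨hm, _⟩ | ⟨hm, _⟩ <;>
        rcases min_cases (C.hi k) (C'.hi k) with ⟨hn, _⟩ | ⟨hn, _⟩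
      · exfalso
        rw [hm] at hmaxp
        rw [hn] at hminp
        have := hfulC k
        rw [hmaxp, hminp] at this
        exact lt_irrefl _ this
      · left
        rw [hm] at hmaxp
        rw [hn] at hminp
        exact ⟨hmaxp, hminp⟩
      · right
        rw [hm] at hmaxp
        rw [hn] at hminp
        exact ⟨hminp, hmaxp⟩
      · exfalso
        rw [hm] at hmaxp
        rw [hn] at hminp
        have := hfulC' k
        rw [hmaxp, hminp] at this
        exact lt_irrefl _ this
  rw [Finset.filter_congr (fun k _ => hiff k)]
  have hsplit := Finset.card_filter_add_card_filter_not
    (s := (univ : Finset (Fin d)))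
    (p := fun k => max (C.lo k) (C'.lo k) < min (C.hi k) (C'.hi k))
  have huniv : (univ : Finset (Fin d)).card = d := by simp
  have hidr : interDim C C' = (univ.filter fun k =>
      max (C.lo k) (C'.lo k) < min (C.hi k) (C'.hi k)).card := rfl
  omega

lemma backward_dir {𝒯 : Finset (Box d)} (hT : IsTiling 𝒯)
    (h : ∀ A ∈ withExt 𝒯, ∀ B ∈ withExt 𝒯, A ≠ B → Intersects A B →
      interDim A B = d - 1) : Proper 𝒯 := by
  classical
  intro p
  by_contra hcon
  push_neg at hcon
  set F : Finset (Box d) := (withExt 𝒯).filter (fun C => C.mem p) with hFdef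
  rcases Nat.eq_zero_or_pos d with hd0 | hdpos
  · have hcard1 : F.card ≤ 1 := Finset.card_le_one.2 (fun a _ b _ => by
      obtain ⟨alo, ahi⟩ := a
      obtain ⟨blo, bhi⟩ := b
      subst hd0
      congr 1 <;> funext i <;> exact i.elim0)
    omega
  have hmemF : ∀ C : ↥F, (C : Box d) ∈ withExt 𝒯 ∧ (C : Box d).mem p :=
    fun C => Finset.mem_filter.1 C.2
  have hfull : ∀ C : ↥F, (C : Box d).FullDim :=
    fun C => fullDim_of_mem_withExt hT (hmemF C).1
  -- linear map and kernel
  set Φ : (↥F → ℝ) →ₗ[ℝ] (Fin d → ℝ) × ℝ := {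
    toFun := fun x => (fun k => ∑ C : ↥F,
      if (C : Box d).lo k = ((p k : ℝ) : EReal) then x C else 0, ∑ C : ↥F, x C)
    map_add' := fun x y => by
      refine Prod.ext (funext fun k => ?_) ?_
      · simp only [Prod.fst_add, Pi.add_apply]
        rw [← Finset.sum_add_distrib]
        exact Finset.sum_congr rfl fun C _ => by split_ifs <;> simp
      · simp only [Prod.snd_add]
        exact Finset.sum_add_distrib
    map_smul' := fun m x => by
      refine Prod.ext (funext fun k => ?_) ?_
      · simp only [Prod.smul_fst, Pi.smul_apply, smul_eq_mul, RingHom.id_apply]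
        rw [Finset.mul_sum]
        exact Finset.sum_congr rfl fun C _ => by split_ifs <;> simp
      · simp only [Prod.smul_snd, smul_eq_mul, RingHom.id_apply]
        rw [Finset.mul_sum]
        exact Finset.sum_congr rfl fun C _ => by simp } with hΦdef
  have hrankdom : Module.finrank ℝ (↥F → ℝ) = F.card := by
    rw [Module.finrank_fintype_fun_eq_card, Fintype.card_coe]
  have hrankcod : Module.finrank ℝ ((Fin d → ℝ) × ℝ) = d + 1 := by
    rw [Module.finrank_prod, Module.finrank_fin_fun, Module.finrank_self]
  have hker : LinearMap.ker Φ ≠ ⊥ := by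
    intro hbot
    have hinj := LinearMap.ker_eq_bot.1 hbot
    have hle := LinearMap.finrank_le_finrank_of_injective hinj
    rw [hrankdom, hrankcod] at hle
    omega
  obtain ⟨x, hxker, hxne⟩ := Submodule.exists_mem_ne_zero_of_ne_bot hker
  have hx0 := LinearMap.mem_ker.1 hxker
  have hyk : ∀ k, ∑ C : ↥F,
      (if (C : Box d).lo k = ((p k : ℝ) : EReal) then x C else 0) = 0 := by
    intro k
    have h1 := congrFun (congrArg Prod.fst hx0) k
    simpa [hΦdef] using h1
  have hysum : ∑ C : ↥F, x C = 0 := by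
    have h1 := congrArg Prod.snd hx0
    simpa [hΦdef] using h1
  have hdiag : ∀ k, ∀ C : ↥F, ¬ dgP p (C : Box d) (C : Box d) k := by
    intro k C hc
    rcases hc with ⟨h1, h2⟩ | ⟨h1, h2⟩
    · have hfc := hfull C k
      rw [h1, h2] at hfc
      exact lt_irrefl _ hfc
    · have hfc := hfull C k
      rw [h2, h1] at hfc
      exact lt_irrefl _ hfc
  have hpair : ∀ C C' : ↥F, C ≠ C' → x C * x C' =
      ∑ k : Fin d, (if dgP p (C : Box d) (C' : Box d) k then x C * x C' else 0) := by
    intro C C' hne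
    have hne' : (C : Box d) ≠ (C' : Box d) := fun hc => hne (Subtype.ext hc)
    rw [← Finset.sum_filter, Finset.sum_const,
      dgP_card_one hT hdpos h p (hmemF C).1 (hmemF C').1 (hmemF C).2 (hmemF C').2 hne',
      one_smul]
  -- the main double-counting identity
  have hprod : ∀ k : Fin d,
      ∑ C : ↥F, ∑ C' : ↥F,
        (if dgP p (C : Box d) (C' : Box d) k then x C * x C' else 0) = 0 := by
    intro k
    have hsplitite : ∀ C C' : ↥F,
        (if dgP p (C : Box d) (C' : Box d) k then x C * x C' else 0) =
        (if (C : Box d).lo k = ((p k : ℝ) : EReal) then x C else 0) *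
          (if (C' : Box d).hi k = ((p k : ℝ) : EReal) then x C' else 0) +
        (if (C : Box d).hi k = ((p k : ℝ) : EReal) then x C else 0) *
          (if (C' : Box d).lo k = ((p k : ℝ) : EReal) then x C' else 0) := by
      intro C C'
      by_cases hd : dgP p (C : Box d) (C' : Box d) k
      · rw [if_pos hd]
        rcases hd with ⟨h1, h2⟩ | ⟨h1, h2⟩
        · have h3 : ¬ (C : Box d).hi k = ((p k : ℝ) : EReal) := by
            intro hc
            have hfc := hfull C k
            rw [h1, hc] at hfc
            exact lt_irrefl _ hfc
          rw [if_pos h1, if_pos h2, if_neg h3]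
          ring
        · have h4 : ¬ (C' : Box d).hi k = ((p k : ℝ) : EReal) := by
            intro hc
            have hfc := hfull C' k
            rw [h2, hc] at hfc
            exact lt_irrefl _ hfc
          rw [if_pos h1, if_pos h2, if_neg h4]
          ring
      · rw [if_neg hd]
        unfold dgP at hd
        push_neg at hd
        obtain ⟨hd1, hd2⟩ := hd
        by_cases h1 : (C : Box d).lo k = ((p k : ℝ) : EReal)
        · rw [if_pos h1, if_neg (hd1 h1)]
          by_cases h3 : (C : Box d).hi k = ((p k : ℝ) : EReal)
          · rw [if_pos h3, if_neg (hd2 h3)]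
            ring
          · rw [if_neg h3]
            ring
        · rw [if_neg h1]
          by_cases h3 : (C : Box d).hi k = ((p k : ℝ) : EReal)
          · rw [if_pos h3, if_neg (hd2 h3)]
            ring
          · rw [if_neg h3]
            ring
    rw [Finset.sum_congr rfl (fun C _ => Finset.sum_congr rfl
      (fun C' _ => hsplitite C C'))]
    rw [Finset.sum_congr rfl (fun C _ => Finset.sum_add_distrib)]
    rw [Finset.sum_add_distrib]
    rw [← Finset.sum_mul_sum, ← Finset.sum_mul_sum]
    rw [hyk k]
    ring
  have hsq : ∑ C : ↥F, x C * x C = 0 := by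
    have h1 : (0 : ℝ) = (∑ C : ↥F, x C) * (∑ C' : ↥F, x C') := by
      rw [hysum]
      ring
    rw [Finset.sum_mul_sum] at h1
    have h2 : ∀ C : ↥F, ∑ C' : ↥F, x C * x C' =
        x C * x C + ∑ C' ∈ univ.erase C, x C * x C' :=
      fun C => (Finset.add_sum_erase _ _ (Finset.mem_univ C)).symm
    rw [Finset.sum_congr rfl (fun C _ => h2 C), Finset.sum_add_distrib] at h1
    have h3 : ∑ C : ↥F, ∑ C' ∈ univ.erase C, x C * x C' = 0 := by
      have h4 : ∀ C : ↥F, ∑ C' ∈ univ.erase C, x C * x C' =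
          ∑ C' : ↥F, ∑ k : Fin d,
            (if dgP p (C : Box d) (C' : Box d) k then x C * x C' else 0) := by
        intro C
        rw [Finset.sum_congr rfl (fun C' hC' =>
          hpair C C' (Finset.ne_of_mem_erase hC').symm)]
        have hdz : ∑ k : Fin d,
            (if dgP p (C : Box d) (C : Box d) k then x C * x C else 0) = 0 :=
          Finset.sum_eq_zero (fun k _ => if_neg (hdiag k C))
        rw [← Finset.add_sum_erase _ (fun C' : ↥F => ∑ k : Fin d,
          (if dgP p (C : Box d) (C' : Box d) k then x C * x C' else 0))
          (Finset.mem_univ C), hdz, zero_add]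
      rw [Finset.sum_congr rfl (fun C _ => h4 C)]
      rw [Finset.sum_congr rfl (fun C _ => Finset.sum_comm)]
      rw [Finset.sum_comm]
      exact Finset.sum_eq_zero (fun k _ => hprod k)
    rw [h3, add_zero] at h1
    exact h1.symm
  have hzero : ∀ C : ↥F, x C = 0 := by
    intro C
    have hz := (Finset.sum_eq_zero_iff_of_nonneg
      (fun C _ => mul_self_nonneg (x C))).1 hsq C (Finset.mem_univ C)
    exact mul_self_eq_zero.1 hz
  exact hxne (funext hzero)

end Stmt6Aux
/-- A `d`-tiling `T` is proper if and only if any two intersecting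
boxes `A, B` of `T ∪ T_ext` satisfy `dim(A ∩ B) = d - 1`. -/
theorem stmt6 (d : ℕ) (𝒯 : Finset (Box d)) (hT : IsTiling 𝒯) :
    Proper 𝒯 ↔
      ∀ A ∈ withExt 𝒯, ∀ B ∈ withExt 𝒯, A ≠ B → Intersects A B →
        interDim A B = d - 1 := by
  constructor
  · intro hP
    exact Stmt6Aux.forward_dir hT hP
  · intro h
    exact Stmt6Aux.backward_dir hT h

end
end

section
/- Let d ≥ 3 and let S ⊂ ℝ^d be a connected set that is a finite union of d-dimensional d-boxes. If for every i ∈ {1,…,d} and every x ∈ ℝ the slice S ∩ H^(i)_x is either empty or a box, then S is a box. -/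
/- Common framework: axis-parallel boxes (with extended-real endpoints, to
accommodate the unbounded exterior boxes of `T_ext`), `d`-tilings of the cube
`[-1,1]^d`, the exterior boxes, proper tilings, slices, cuts, sides and
separations. -/

noncomputable section

open Classical

attribute [local instance] Classical.propDecidable

section Stmt11Aux

variable {d : ℕ}

private lemma stmt11_box_closed (B : Box d) : IsClosed B.toSet := by
  have h : B.toSet = ⋂ i, (fun p : Fin d → ℝ => p i) ⁻¹'
      (((↑) : ℝ → EReal) ⁻¹' Set.Icc (B.lo i) (B.hi i)) := by
    ext p
    simp [Box.toSet, Box.mem, Set.mem_iInter, Set.mem_Icc]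
  rw [h]
  exact isClosed_iInter fun i =>
    (isClosed_Icc.preimage continuous_coe_real_ereal).preimage (continuous_apply i)

private lemma stmt11_exists_third (hd : 3 ≤ d) (i l : Fin d) :
    ∃ j : Fin d, j ≠ i ∧ j ≠ l := by
  by_contra h
  push_neg at h
  have hsub : (Finset.univ : Finset (Fin d)) ⊆ {i, l} := by
    intro j _
    rcases Classical.em (j = i) with hj | hj
    · simp [hj]
    · simp [h j hj]
  have h1 := Finset.card_le_card hsub
  have h2 : ({i, l} : Finset (Fin d)).card ≤ 2 := by
    classical
    exact (Finset.card_insert_le _ _).trans (by simp)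
  simp [Finset.card_univ] at h1
  omega

/-- The "share a coordinate" relation on points of `S`. -/
def shRel (S : Set (Fin d → ℝ)) (a b : Fin d → ℝ) : Prop :=
  a ∈ S ∧ b ∈ S ∧ ∃ k, a k = b k

variable {S : Set (Fin d → ℝ)}

private lemma stmt11_sliceSwap
    (hslice : ∀ (i : Fin d) (x : ℝ),
      S ∩ {p | p i = x} = ∅ ∨ ∃ C : Box d, S ∩ {p | p i = x} = C.toSet)
    {p q : Fin d → ℝ} (hp : p ∈ S) (hq : q ∈ S) {k : Fin d} (hk : p k = q k)
    (i : Fin d) : Function.update p i (q i) ∈ S := by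
  rcases hslice k (p k) with h | ⟨C, hC⟩
  · exfalso
    have : p ∈ S ∩ {x | x k = p k} := ⟨hp, rfl⟩
    rw [h] at this
    exact this
  · have hpC : C.mem p := by
      have : p ∈ S ∩ {x | x k = p k} := ⟨hp, rfl⟩
      rwa [hC] at this
    have hqC : C.mem q := by
      have : q ∈ S ∩ {x | x k = p k} := ⟨hq, hk.symm⟩
      rwa [hC] at this
    have hmem : C.mem (Function.update p i (q i)) := by
      intro j
      rcases eq_or_ne j i with rfl | hj
      · simpa [Function.update_self] using hqC j
      · simpa [Function.update_of_ne hj] using hpC j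
    have : Function.update p i (q i) ∈ S ∩ {x | x k = p k} := by
      rw [hC]; exact hmem
    exact this.1

private lemma stmt11_twoStep (hd : 3 ≤ d)
    (hslice : ∀ (i : Fin d) (x : ℝ),
      S ∩ {p | p i = x} = ∅ ∨ ∃ C : Box d, S ∩ {p | p i = x} = C.toSet)
    {p m q : Fin d → ℝ} (hp : p ∈ S) (hm : m ∈ S) (hq : q ∈ S)
    (h1 : ∃ k, p k = m k) (h2 : ∃ l, m l = q l) (i : Fin d) :
    Function.update p i (q i) ∈ S := by
  obtain ⟨k, hk⟩ := h1
  obtain ⟨l, hl⟩ := h2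
  have ha : Function.update m i (q i) ∈ S := stmt11_sliceSwap hslice hm hq hl i
  rcases eq_or_ne k i with rfl | hki
  · rcases eq_or_ne l k with rfl | hli
    · -- p k = m k = q k
      have hpq : q l = p l := (hk.trans hl).symm
      rw [hpq, Function.update_eq_self]
      exact hp
    · -- k = i, l ≠ i
      have hc : Function.update p l (m l) ∈ S := stmt11_sliceSwap hslice hp hm hk l
      have hshare : (Function.update p l (m l)) l = (Function.update m k (q k)) l := by
        rw [Function.update_self, Function.update_of_ne hli]
      have hr' : Function.update (Function.update p l (m l)) k
          ((Function.update m k (q k)) k) ∈ S :=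
        stmt11_sliceSwap hslice hc ha hshare k
      rw [Function.update_self] at hr'
      obtain ⟨j, hji, hjl⟩ := stmt11_exists_third hd k l
      have hshare2 : (Function.update (Function.update p l (m l)) k (q k)) j = p j := by
        rw [Function.update_of_ne hji, Function.update_of_ne hjl]
      have hr : Function.update
          (Function.update (Function.update p l (m l)) k (q k)) l (p l) ∈ S :=
        stmt11_sliceSwap hslice hr' hp hshare2 l
      have heq : Function.update
          (Function.update (Function.update p l (m l)) k (q k)) l (p l)
          = Function.update p k (q k) := by
        funext x
        rcases eq_or_ne x l with rfl | hxl
        · rw [Function.update_self, Function.update_of_ne hli]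
        · rcases eq_or_ne x k with rfl | hxk
          · rw [Function.update_of_ne hxl, Function.update_self, Function.update_self]
          · rw [Function.update_of_ne hxl, Function.update_of_ne hxk,
              Function.update_of_ne hxl, Function.update_of_ne hxk]
      rwa [heq] at hr
  · -- k ≠ i
    have hshare : p k = (Function.update m i (q i)) k := by
      rw [Function.update_of_ne hki]; exact hk
    have := stmt11_sliceSwap hslice hp ha hshare i
    rwa [Function.update_self] at this

private lemma stmt11_chainSwap (hd : 3 ≤ d)
    (hslice : ∀ (i : Fin d) (x : ℝ),
      S ∩ {p | p i = x} = ∅ ∨ ∃ C : Box d, S ∩ {p | p i = x} = C.toSet)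
    {p q : Fin d → ℝ} (h : Relation.ReflTransGen (shRel S) p q) (hp : p ∈ S) :
    ∀ i, Function.update p i (q i) ∈ S := by
  induction h with
  | refl => intro i; rw [Function.update_eq_self]; exact hp
  | @tail m w hpm hmw ih =>
    intro i
    obtain ⟨hm, hq, l, hl⟩ : m ∈ S ∧ w ∈ S ∧ ∃ k, m k = w k := hmw
    have hv : Function.update p i (m i) ∈ S := ih i
    have h1 : ∃ k, (Function.update p i (m i)) k = m k :=
      ⟨i, Function.update_self i (m i) p⟩
    have h2 : ∃ t, m t = w t := ⟨l, hl⟩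
    have := stmt11_twoStep hd hslice hv hm hq h1 h2 i
    rwa [Function.update_idem] at this

private lemma stmt11_coBox_chain (hd : 3 ≤ d) {B : Box d} (hBS : B.toSet ⊆ S)
    {p q : Fin d → ℝ} (hp : p ∈ B.toSet) (hq : q ∈ B.toSet) :
    Relation.ReflTransGen (shRel S) p q := by
  have hd0 : 0 < d := by omega
  set i0 : Fin d := ⟨0, hd0⟩ with hi0
  obtain ⟨j, hj, -⟩ := stmt11_exists_third hd i0 i0
  set w := Function.update p i0 (q i0) with hw
  have hwB : w ∈ B.toSet := by
    intro l
    rcases eq_or_ne l i0 with rfl | hl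
    · rw [hw, Function.update_self]; exact hq _
    · rw [hw, Function.update_of_ne hl]; exact hp l
  have h1 : shRel S p w := ⟨hBS hp, hBS hwB, j, by rw [hw, Function.update_of_ne hj]⟩
  have h2 : shRel S w q := ⟨hBS hwB, hBS hq, i0, by rw [hw, Function.update_self]⟩
  exact (Relation.ReflTransGen.single h1).tail h2

private lemma stmt11_chain_all (hd : 3 ≤ d) (hconn : IsConnected S)
    {𝓑 : Finset (Box d)} (hS : S = ⋃ B ∈ 𝓑, B.toSet)
    {p q : Fin d → ℝ} (hp : p ∈ S) (hq : q ∈ S) :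
    Relation.ReflTransGen (shRel S) p q := by
  classical
  set T : Set (Fin d → ℝ) := {x | x ∈ S ∧ Relation.ReflTransGen (shRel S) p x} with hT
  have hBsub : ∀ B ∈ 𝓑, B.toSet ⊆ S := by
    intro B hB
    rw [hS]
    exact Set.subset_biUnion_of_mem hB
  have absorb : ∀ B ∈ 𝓑, ∀ x ∈ B.toSet, x ∈ T → ∀ y ∈ B.toSet, y ∈ T := by
    intro B hB x hx hxT y hy
    exact ⟨hBsub B hB hy, hxT.2.trans (stmt11_coBox_chain hd (hBsub B hB) hx hy)⟩
  set F1 : Set (Fin d → ℝ) :=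
    ⋃ B ∈ 𝓑.filter (fun B => (B.toSet ∩ T).Nonempty), B.toSet with hF1
  set F2 : Set (Fin d → ℝ) :=
    ⋃ B ∈ 𝓑.filter (fun B => ¬ (B.toSet ∩ T).Nonempty), B.toSet with hF2
  have hF1closed : IsClosed F1 :=
    Set.Finite.isClosed_biUnion (Finset.finite_toSet _) fun B _ => stmt11_box_closed B
  have hF2closed : IsClosed F2 :=
    Set.Finite.isClosed_biUnion (Finset.finite_toSet _) fun B _ => stmt11_box_closed B
  have hcover : S ⊆ F1 ∪ F2 := by
    intro x hx
    rw [hS] at hx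
    obtain ⟨B, hB, hxB⟩ := Set.mem_iUnion₂.mp hx
    by_cases h : (B.toSet ∩ T).Nonempty
    · exact Or.inl (Set.mem_iUnion₂.mpr ⟨B, Finset.mem_filter.mpr ⟨hB, h⟩, hxB⟩)
    · exact Or.inr (Set.mem_iUnion₂.mpr ⟨B, Finset.mem_filter.mpr ⟨hB, h⟩, hxB⟩)
  have hF1T : ∀ x ∈ F1, x ∈ T := by
    intro x hx
    obtain ⟨B, hB, hxB⟩ := Set.mem_iUnion₂.mp hx
    obtain ⟨hB𝓑, hne⟩ := Finset.mem_filter.mp hB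
    obtain ⟨z, hz, hzT⟩ := hne
    exact absorb B hB𝓑 z hz hzT x hxB
  have hF2T : ∀ x ∈ F2, x ∉ T := by
    intro x hx hxT
    obtain ⟨B, hB, hxB⟩ := Set.mem_iUnion₂.mp hx
    exact (Finset.mem_filter.mp hB).2 ⟨x, hxB, hxT⟩
  have hdisj : ¬ (S ∩ (F1 ∩ F2)).Nonempty := by
    rintro ⟨x, -, hx1, hx2⟩
    exact hF2T x hx2 (hF1T x hx1)
  have hpF1 : p ∈ F1 := by
    have hp' := hp
    rw [hS] at hp'
    obtain ⟨B, hB, hpB⟩ := Set.mem_iUnion₂.mp hp'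
    have hpT : p ∈ T := ⟨hp, Relation.ReflTransGen.refl⟩
    exact Set.mem_iUnion₂.mpr ⟨B, Finset.mem_filter.mpr ⟨hB, ⟨p, hpB, hpT⟩⟩, hpB⟩
  have hqT : q ∈ T := by
    by_contra hqT
    have hq2 : q ∈ F2 := by
      rcases hcover hq with h | h
      · exact absurd (hF1T q h) hqT
      · exact h
    exact hdisj (isPreconnected_closed_iff.mp hconn.isPreconnected F1 F2
      hF1closed hF2closed hcover ⟨p, hp, hpF1⟩ ⟨q, hq, hq2⟩)
  exact hqT.2

end Stmt11Aux

/-- Let `d ≥ 3` and let `S ⊆ ℝ^d` be a connected set that is a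
finite union of `d`-dimensional `d`-boxes. If every slice `S ∩ H^(i)_x` is
empty or a box, then `S` is a box. -/


theorem stmt11 (d : ℕ) (hd : 3 ≤ d) (S : Set (Fin d → ℝ))
    (hconn : IsConnected S)
    (𝓑 : Finset (Box d)) (hfull : ∀ B ∈ 𝓑, B.FullDim)
    (hS : S = ⋃ B ∈ 𝓑, B.toSet)
    (hslice : ∀ (i : Fin d) (x : ℝ),
      S ∩ {p | p i = x} = ∅ ∨ ∃ C : Box d, S ∩ {p | p i = x} = C.toSet) :
    ∃ C : Box d, S = C.toSet := by
  classical
  have hSclosed : IsClosed S := by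
    rw [hS]
    exact Set.Finite.isClosed_biUnion (Finset.finite_toSet _)
      fun B _ => stmt11_box_closed B
  obtain ⟨p₀, hp₀⟩ := hconn.nonempty
  have hswap : ∀ p ∈ S, ∀ q ∈ S, ∀ i, Function.update p i (q i) ∈ S := by
    intro p hp q hq i
    exact stmt11_chainSwap hd hslice (stmt11_chain_all hd hconn hS hp hq) hp i
  refine ⟨⟨fun i => sInf ((fun p : Fin d → ℝ => (p i : EReal)) '' S),
           fun i => sSup ((fun p : Fin d → ℝ => (p i : EReal)) '' S)⟩, ?_⟩
  ext r
  constructor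
  · intro hr i
    exact ⟨sInf_le ⟨r, hr, rfl⟩, le_sSup ⟨r, hr, rfl⟩⟩
  · intro hr
    have hcoord : ∀ i, ∃ p ∈ S, p i = r i := by
      intro i
      set J : Set ℝ := (fun p : Fin d → ℝ => p i) '' S with hJ
      have hJclosed : IsClosed J := by
        refine isClosed_of_closure_subset ?_
        intro x hx
        obtain ⟨u, hu, hlim⟩ := mem_closure_iff_seq_limit.mp hx
        choose pn hpn hpni using hu
        have hlim2 : Filter.Tendsto (fun n => Function.update p₀ i (u n))
            Filter.atTop (nhds (Function.update p₀ i x)) := by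
          rw [tendsto_pi_nhds]
          intro j
          rcases eq_or_ne j i with rfl | hj
          · simpa [Function.update_self] using hlim
          · simpa [Function.update_of_ne hj] using (tendsto_const_nhds :
              Filter.Tendsto (fun _ : ℕ => p₀ j) Filter.atTop (nhds (p₀ j)))
        have hmem : ∀ n, Function.update p₀ i (u n) ∈ S := by
          intro n
          have hni : pn n i = u n := hpni n
          have := hswap p₀ hp₀ (pn n) (hpn n) i
          rwa [hni] at this
        have hxS : Function.update p₀ i x ∈ S :=
          hSclosed.mem_of_tendsto hlim2 (Filter.Eventually.of_forall hmem)
        exact ⟨Function.update p₀ i x, hxS, Function.update_self i x p₀⟩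
      have hJord : Set.OrdConnected J :=
        ((hconn.isPreconnected).image _ (continuous_apply i).continuousOn).ordConnected
      by_cases hup : ∃ b ∈ J, r i ≤ b
      · by_cases hdown : ∃ a ∈ J, a ≤ r i
        · obtain ⟨b, hb, hrb⟩ := hup
          obtain ⟨a, ha, har⟩ := hdown
          have hmem : r i ∈ J := hJord.out ha hb ⟨har, hrb⟩
          obtain ⟨p, hp, hpi⟩ := hmem
          exact ⟨p, hp, hpi⟩
        · push_neg at hdown
          have hclos : r i ∈ closure J := by
            rw [Metric.mem_closure_iff]
            intro ε hε
            by_contra hcon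
            push_neg at hcon
            have hbound : ∀ a ∈ J, r i + ε ≤ a := by
              intro a ha
              have h1 := hdown a ha
              have h2 := hcon a ha
              have hda : dist (r i) a = a - r i := by
                rw [Real.dist_eq, abs_of_nonpos (by linarith)]
                ring
              rw [hda] at h2
              linarith
            have hle : ((r i + ε : ℝ) : EReal) ≤
                sInf ((fun p : Fin d → ℝ => (p i : EReal)) '' S) := by
              apply le_sInf
              rintro _ ⟨p, hp, rfl⟩
              show ((r i + ε : ℝ) : EReal) ≤ ((p i : ℝ) : EReal)
              exact_mod_cast hbound (p i) ⟨p, hp, rfl⟩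
            have h2 := (hr i).1
            have : ((r i + ε : ℝ) : EReal) ≤ ((r i : ℝ) : EReal) := hle.trans h2
            have : r i + ε ≤ r i := by exact_mod_cast this
            linarith
          rw [hJclosed.closure_eq] at hclos
          obtain ⟨p, hp, hpi⟩ := hclos
          exact ⟨p, hp, hpi⟩
      · push_neg at hup
        have hclos : r i ∈ closure J := by
          rw [Metric.mem_closure_iff]
          intro ε hε
          by_contra hcon
          push_neg at hcon
          have hbound : ∀ a ∈ J, a ≤ r i - ε := by
            intro a ha
            have h1 := hup a ha
            have h2 := hcon a ha
            have hda : dist (r i) a = r i - a := by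
              rw [Real.dist_eq, abs_of_nonneg (by linarith)]
            rw [hda] at h2
            linarith
          have hle : sSup ((fun p : Fin d → ℝ => (p i : EReal)) '' S) ≤
              ((r i - ε : ℝ) : EReal) := by
            apply sSup_le
            rintro _ ⟨p, hp, rfl⟩
            show ((p i : ℝ) : EReal) ≤ ((r i - ε : ℝ) : EReal)
            exact_mod_cast hbound (p i) ⟨p, hp, rfl⟩
          have h2 := (hr i).2
          have : ((r i : ℝ) : EReal) ≤ ((r i - ε : ℝ) : EReal) := h2.trans hle
          have : r i ≤ r i - ε := by exact_mod_cast this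
          linarith
        rw [hJclosed.closure_eq] at hclos
        obtain ⟨p, hp, hpi⟩ := hclos
        exact ⟨p, hp, hpi⟩
    have hstep : ∀ A : Finset (Fin d), ∃ s ∈ S, ∀ i ∈ A, s i = r i := by
      intro A
      induction A using Finset.induction_on with
      | empty => exact ⟨p₀, hp₀, by simp⟩
      | @insert i A hni ih =>
        obtain ⟨s, hs, hsA⟩ := ih
        obtain ⟨t, ht, hti⟩ := hcoord i
        refine ⟨Function.update s i (t i), hswap s hs t ht i, ?_⟩
        intro j hj
        rcases eq_or_ne j i with rfl | hji
        · rw [Function.update_self]; exact hti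
        · rw [Function.update_of_ne hji]
          exact hsA j (Finset.mem_of_mem_insert_of_ne hj hji)
    obtain ⟨s, hs, hsu⟩ := hstep Finset.univ
    have heq : s = r := funext fun i => hsu i (Finset.mem_univ i)
    rwa [← heq]


end
end
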